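/- arXiv:1810.10737 — 8 statements merged into one kernel-verified Lean document; each statement's English description precedes it below -/
import Mathlib

section
/- Let L : ℝ^m → ℝ^ν be continuously differentiable and let f, g : ℝ^m → ℝ^m be continuous. Fix y, Ȳ ∈ ℝ^m, real numbers h, w, and vectors α₀, α₁ ∈ ℝ^ν, and set σ(τ) = y + τ(Ȳ − y) for τ ∈ [0,1]. Suppose the single-noise MAVF scheme equations hold: (i) Ȳ = y + h[∫₀¹ f(σ(τ)) dτ − (∫₀¹ ∇L(σ(τ))ᵀ dτ) α₀] + w[∫₀¹ g(σ(τ)) dτ − (∫₀¹ ∇L(σ(τ))ᵀ dτ) α₁]; (ii) (∫₀¹ ∇L(σ(τ)) dτ)(∫₀¹ ∇L(σ(τ))ᵀ dτ) α₀ = (∫₀¹ ∇L(σ(τ)) dτ)(∫₀¹ f(σ(τ)) dτ); (iii) (∫₀¹ ∇L(σ(τ)) dτ)(∫₀¹ ∇L(σ(τ))ᵀ dτ) α₁ = (∫₀¹ ∇L(σ(τ)) dτ)(∫₀¹ g(σ(τ)) dτ). Then L(Ȳ) = L(y). -/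
open Matrix MeasureTheory

/-- One step of the single-noise MAVF scheme exactly preserves
all ν invariants collected in `L` (part (I) of Theorem 3.1). -/
theorem mavf_single_noise_preserves_invariants
    (m ν : ℕ) (L : (Fin m → ℝ) → (Fin ν → ℝ))
    (f g : (Fin m → ℝ) → (Fin m → ℝ))
    (hL : ContDiff ℝ 1 L) (hf : Continuous f) (hg : Continuous g)
    (y Ybar : Fin m → ℝ) (h w : ℝ) (α₀ α₁ : Fin ν → ℝ)
    (σ : ℝ → (Fin m → ℝ)) (hσ : ∀ τ, σ τ = y + τ • (Ybar - y))
    -- `J x` is the ν×m Jacobian matrix of `L` at `x`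
    (J : (Fin m → ℝ) → Matrix (Fin ν) (Fin m) ℝ)
    (hJ : ∀ x i l, J x i l = fderiv ℝ L x (Pi.single l 1) i)
    -- `A = ∫₀¹ ∇L(σ(τ)) dτ` (componentwise)
    (A : Matrix (Fin ν) (Fin m) ℝ)
    (hA : ∀ i l, A i l = ∫ τ in (0:ℝ)..1, J (σ τ) i l)
    -- `F = ∫₀¹ f(σ(τ)) dτ`, `G = ∫₀¹ g(σ(τ)) dτ` (componentwise)
    (F G : Fin m → ℝ)
    (hF : ∀ l, F l = ∫ τ in (0:ℝ)..1, f (σ τ) l)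
    (hG : ∀ l, G l = ∫ τ in (0:ℝ)..1, g (σ τ) l)
    -- the MAVF scheme equations (i), (ii), (iii)
    (heq1 : Ybar = y + h • (F - Aᵀ.mulVec α₀) + w • (G - Aᵀ.mulVec α₁))
    (heq2 : (A * Aᵀ).mulVec α₀ = A.mulVec F)
    (heq3 : (A * Aᵀ).mulVec α₁ = A.mulVec G) :
    L Ybar = L y := by
  set v : Fin m → ℝ := Ybar - y with hv
  have hσfun : σ = fun τ => y + τ • v := funext hσ
  have hσcont : Continuous σ := by
    rw [hσfun]; continuity
  have hσd : ∀ τ : ℝ, HasDerivAt σ v τ := by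
    intro τ
    rw [hσfun]
    simpa using (((hasDerivAt_id τ).smul_const v).const_add y)
  have hLd := hL.differentiable one_ne_zero
  -- derivative of L ∘ σ
  have hcomp : ∀ τ : ℝ, HasDerivAt (fun t => L (σ t)) (fderiv ℝ L (σ τ) v) τ := by
    intro τ
    exact ((hLd (σ τ)).hasFDerivAt).comp_hasDerivAt τ (hσd τ)
  -- fderiv applied to v, componentwise
  have hfd : ∀ x i, fderiv ℝ L x v i = ∑ l, v l * J x i l := by
    intro x i
    have hvrep : v = ∑ l, Pi.single l (v l) := (Finset.univ_sum_single v).symm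
    calc fderiv ℝ L x v i = fderiv ℝ L x (∑ l, Pi.single l (v l)) i := by rw [← hvrep]
      _ = (∑ l, fderiv ℝ L x (Pi.single l (v l))) i := by rw [map_sum]
      _ = ∑ l, fderiv ℝ L x (Pi.single l (v l)) i := by rw [Finset.sum_apply]
      _ = ∑ l, v l * J x i l := by
          refine Finset.sum_congr rfl fun l _ => ?_
          have : (Pi.single l (v l) : Fin m → ℝ) = v l • (Pi.single l 1 : Fin m → ℝ) := by
            rw [← Pi.single_smul, smul_eq_mul, mul_one]
          rw [this, _root_.map_smul, hJ]
          simp [smul_eq_mul]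
  -- continuity of τ ↦ J (σ τ) i l
  have hfderiv_cont : Continuous (fderiv ℝ L) := hL.continuous_fderiv one_ne_zero
  have hJcont : ∀ i l, Continuous fun τ => J (σ τ) i l := by
    intro i l
    simp only [hJ]
    exact (continuous_apply i).comp ((hfderiv_cont.comp hσcont).clm_apply continuous_const)
  -- FTC per component
  have key : ∀ i, L Ybar i - L y i = A.mulVec v i := by
    intro i
    have hderiv : ∀ τ ∈ Set.uIcc (0:ℝ) 1,
        HasDerivAt (fun t => L (σ t) i) (∑ l, v l * J (σ τ) i l) τ := by
      intro τ _
      have := hasDerivAt_pi.mp (hcomp τ) i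
      rwa [hfd] at this
    have hcontsum : Continuous fun τ => ∑ l, v l * J (σ τ) i l := by
      exact continuous_finset_sum _ fun l _ => continuous_const.mul (hJcont i l)
    have hftc := intervalIntegral.integral_eq_sub_of_hasDerivAt hderiv
      (hcontsum.intervalIntegrable 0 1)
    have hσ0 : σ 0 = y := by simp [hσfun]
    have hσ1 : σ 1 = Ybar := by simp [hσfun, hv]
    rw [hσ0, hσ1] at hftc
    rw [← hftc]
    rw [intervalIntegral.integral_finset_sum (f := fun l τ => v l * J (σ τ) i l) (fun l _ =>
      (continuous_const.mul (hJcont i l)).intervalIntegrable 0 1)]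
    simp only [intervalIntegral.integral_const_mul]
    simp only [Matrix.mulVec, dotProduct, hA]
    exact Finset.sum_congr rfl fun l _ => mul_comm _ _
  -- algebraic part
  have hv0 : A.mulVec v = 0 := by
    have hveq : v = h • (F - Aᵀ.mulVec α₀) + w • (G - Aᵀ.mulVec α₁) := by
      rw [hv, heq1]; abel
    rw [hveq, Matrix.mulVec_add, Matrix.mulVec_smul, Matrix.mulVec_smul,
      Matrix.mulVec_sub, Matrix.mulVec_sub, Matrix.mulVec_mulVec, Matrix.mulVec_mulVec,
      heq2, heq3]
    simp
  funext i
  have := key i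
  rw [hv0] at this
  have : L Ybar i - L y i = 0 := by simpa using this
  linarith
end

section
/- Let L : ℝ^m → ℝ^ν be continuously differentiable and let f, g₁, …, g_D : ℝ^m → ℝ^m be continuous. Fix y, Ȳ ∈ ℝ^m, real numbers h, w₁, …, w_D, and vectors α₀, α₁, …, α_D ∈ ℝ^ν, and set σ(τ) = y + τ(Ȳ − y) for τ ∈ [0,1]. Suppose the multi-noise MAVF scheme equations hold: (i) Ȳ = y + h[∫₀¹ f(σ(τ)) dτ − (∫₀¹ ∇L(σ(τ))ᵀ dτ) α₀] + Σ_{r=1}^D w_r [∫₀¹ g_r(σ(τ)) dτ − (∫₀¹ ∇L(σ(τ))ᵀ dτ) α_r]; (ii) (∫₀¹ ∇L(σ(τ)) dτ)(∫₀¹ ∇L(σ(τ))ᵀ dτ) α₀ = (∫₀¹ ∇L(σ(τ)) dτ)(∫₀¹ f(σ(τ)) dτ); (iii) for each r = 1, …, D, (∫₀¹ ∇L(σ(τ)) dτ)(∫₀¹ ∇L(σ(τ))ᵀ dτ) α_r = (∫₀¹ ∇L(σ(τ)) dτ)(∫₀¹ g_r(σ(τ)) dτ). Then L(Ȳ) =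 L(y). -/
open Matrix MeasureTheory

/-- One step of the multi-noise MAVF scheme exactly preserves
all ν invariants collected in `L` (part (I) of Theorem 3.2). -/
theorem mavf_multi_noise_preserves_invariants
    (m ν D : ℕ) (L : (Fin m → ℝ) → (Fin ν → ℝ))
    (f : (Fin m → ℝ) → (Fin m → ℝ)) (g : Fin D → (Fin m → ℝ) → (Fin m → ℝ))
    (hL : ContDiff ℝ 1 L) (hf : Continuous f) (hg : ∀ r, Continuous (g r))
    (y Ybar : Fin m → ℝ) (h : ℝ) (w : Fin D → ℝ)
    (α₀ : Fin ν → ℝ) (α : Fin D → Fin ν → ℝ)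
    (σ : ℝ → (Fin m → ℝ)) (hσ : ∀ τ, σ τ = y + τ • (Ybar - y))
    -- `J x` is the ν×m Jacobian matrix of `L` at `x`
    (J : (Fin m → ℝ) → Matrix (Fin ν) (Fin m) ℝ)
    (hJ : ∀ x i l, J x i l = fderiv ℝ L x (Pi.single l 1) i)
    -- `A = ∫₀¹ ∇L(σ(τ)) dτ` (componentwise)
    (A : Matrix (Fin ν) (Fin m) ℝ)
    (hA : ∀ i l, A i l = ∫ τ in (0:ℝ)..1, J (σ τ) i l)
    -- `F = ∫₀¹ f(σ(τ)) dτ`, `G r = ∫₀¹ g_r(σ(τ)) dτ` (componentwise)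
    (F : Fin m → ℝ) (G : Fin D → Fin m → ℝ)
    (hF : ∀ l, F l = ∫ τ in (0:ℝ)..1, f (σ τ) l)
    (hG : ∀ r l, G r l = ∫ τ in (0:ℝ)..1, g r (σ τ) l)
    -- the MAVF scheme equations (i), (ii), (iii)
    (heq1 : Ybar = y + h • (F - Aᵀ.mulVec α₀) + ∑ r, w r • (G r - Aᵀ.mulVec (α r)))
    (heq2 : (A * Aᵀ).mulVec α₀ = A.mulVec F)
    (heq3 : ∀ r, (A * Aᵀ).mulVec (α r) = A.mulVec (G r)) :
    L Ybar = L y := by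
  set v : Fin m → ℝ := Ybar - y with hv
  -- Step 1: A.mulVec v = 0
  have hvdef : v = h • (F - Aᵀ.mulVec α₀) + ∑ r, w r • (G r - Aᵀ.mulVec (α r)) := by
    rw [hv, heq1]; abel
  have hAv : A.mulVec v = 0 := by
    have hsum : A.mulVec (∑ r, w r • (G r - Aᵀ.mulVec (α r)))
        = ∑ r, A.mulVec (w r • (G r - Aᵀ.mulVec (α r))) := by
      simpa only [Matrix.mulVecLin_apply] using
        map_sum A.mulVecLin (fun r => w r • (G r - Aᵀ.mulVec (α r))) Finset.univ
    rw [hvdef, Matrix.mulVec_add, Matrix.mulVec_smul, hsum]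
    have h0 : A.mulVec (F - Aᵀ.mulVec α₀) = 0 := by
      rw [Matrix.mulVec_sub, Matrix.mulVec_mulVec, heq2, sub_self]
    have hr : ∀ r, A.mulVec (w r • (G r - Aᵀ.mulVec (α r))) = 0 := by
      intro r
      rw [Matrix.mulVec_smul, Matrix.mulVec_sub, Matrix.mulVec_mulVec, heq3 r,
        sub_self, smul_zero]
    simp [h0, hr]
  -- continuity facts
  have hLdiff : Differentiable ℝ L := hL.differentiable one_ne_zero
  have hfderiv_cont : Continuous (fun x => fderiv ℝ L x) := hL.continuous_fderiv one_ne_zero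
  have hσcont : Continuous σ := by
    have : σ = fun τ => y + τ • v := by funext τ; rw [hσ]
    rw [this]; continuity
  have hcont : ∀ u : Fin m → ℝ, ∀ i : Fin ν,
      Continuous (fun τ : ℝ => fderiv ℝ L (σ τ) u i) := by
    intro u i
    exact (continuous_apply i).comp
      ((ContinuousLinearMap.apply ℝ (Fin ν → ℝ) u).continuous.comp
        (hfderiv_cont.comp hσcont))
  -- Step 2: derivative of L ∘ σ
  have hσderiv : ∀ τ : ℝ, HasDerivAt σ v τ := by
    intro τ
    have h1 : HasDerivAt (fun t : ℝ => y + t • v) v τ := by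
      simpa using ((hasDerivAt_id τ).smul_const v).const_add y
    have h2 : σ = fun t : ℝ => y + t • v := by funext t; rw [hσ]
    rw [h2]; exact h1
  have hderiv : ∀ τ : ℝ, HasDerivAt (fun t => L (σ t)) (fderiv ℝ L (σ τ) v) τ :=
    fun τ => (hLdiff (σ τ)).hasFDerivAt.comp_hasDerivAt τ (hσderiv τ)
  -- pointwise expansion of fderiv
  have hexp : ∀ x : Fin m → ℝ, ∀ i : Fin ν,
      fderiv ℝ L x v i = ∑ l, J x i l * v l := by
    intro x i
    have h1 : (fderiv ℝ L x) v = ∑ l, v l • (fderiv ℝ L x) (Pi.single l 1) := by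
      conv_lhs => rw [← Finset.univ_sum_single v]
      rw [map_sum]
      congr 1; funext l
      rw [show Pi.single l (v l) = v l • (Pi.single l 1 : Fin m → ℝ) by
        rw [← Pi.single_smul]; simp, _root_.map_smul]
    calc fderiv ℝ L x v i = (∑ l, v l • (fderiv ℝ L x) (Pi.single l 1)) i := by rw [h1]
      _ = ∑ l, v l * (fderiv ℝ L x) (Pi.single l 1) i := by
          simp [Finset.sum_apply]
      _ = ∑ l, J x i l * v l := by
          congr 1; funext l; rw [hJ]; ring
  funext i
  have hftc : L (σ 1) i - L (σ 0) i = ∫ τ in (0:ℝ)..1, fderiv ℝ L (σ τ) v i := by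
    exact (intervalIntegral.integral_eq_sub_of_hasDerivAt
      (f := fun t => L (σ t) i)
      (fun τ _ => (hasDerivAt_pi.mp (hderiv τ)) i)
      ((hcont v i).intervalIntegrable 0 1)).symm
  have hσ0 : σ 0 = y := by rw [hσ]; simp
  have hσ1 : σ 1 = Ybar := by rw [hσ]; simp [hv]
  have hintegral : (∫ τ in (0:ℝ)..1, fderiv ℝ L (σ τ) v i) = A.mulVec v i := by
    calc (∫ τ in (0:ℝ)..1, fderiv ℝ L (σ τ) v i)
        = ∫ τ in (0:ℝ)..1, ∑ l, J (σ τ) i l * v l := by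
          congr 1; funext τ; exact hexp (σ τ) i
      _ = ∑ l, ∫ τ in (0:ℝ)..1, J (σ τ) i l * v l := by
          apply intervalIntegral.integral_finset_sum
          intro l _
          have : Continuous (fun τ : ℝ => J (σ τ) i l * v l) := by
            have h1 : Continuous (fun τ : ℝ => J (σ τ) i l) := by
              have := hcont (Pi.single l 1) i
              simpa [hJ] using this
            exact h1.mul continuous_const
          exact this.intervalIntegrable 0 1
      _ = ∑ l, (∫ τ in (0:ℝ)..1, J (σ τ) i l) * v l := by
          congr 1; funext l; rw [intervalIntegral.integral_mul_const]
      _ = ∑ l, A i l * v l := by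
          congr 1; funext l; rw [hA]
      _ = A.mulVec v i := rfl
  have : L Ybar i - L y i = 0 := by
    rw [← hσ1, ← hσ0, hftc, hintegral, hAv]; rfl
  linarith
end

section
/- Let j ∈ ℕ and let P : [0,1] → ℝ be continuous with ∫₀¹ P(τ) τ^k dτ = 0 for all integers 0 ≤ k < j. Let F : ℝ → ℝ be (j+1) times continuously differentiable on [0,1] with |F^{(j+1)}(τ)| ≤ M for all τ ∈ [0,1]. Then |∫₀¹ P(τ) F(τ) dτ − (F^{(j)}(0)/j!) ∫₀¹ P(τ) τ^j dτ| ≤ (M/(j+1)!) ∫₀¹ |P(τ)| dτ. -/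
lemma iteratedDerivWithin_congr_set' {f : ℝ → ℝ} {s t : Set ℝ} {x : ℝ}
    (h : s =ᶠ[nhds x] t) (n : ℕ) :
    iteratedDerivWithin n f s x = iteratedDerivWithin n f t x := by
  simp only [iteratedDerivWithin_eq_iteratedFDerivWithin,
    iteratedFDerivWithin_congr_set h n]

/-- deterministic core of Lemma 3.3: if `P` is orthogonal to all
monomials `τ^k`, `k < j`, on `[0,1]` and `F` is `(j+1)` times continuously
differentiable on `[0,1]` with `|F^{(j+1)}| ≤ M` there, then
`∫₀¹ P F` equals `(F^{(j)}(0)/j!) ∫₀¹ P τ^j` up to an error of size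
`(M/(j+1)!) ∫₀¹ |P|`. -/
theorem legendre_projection_remainder_bound
    (j : ℕ) (P : ℝ → ℝ) (hP : ContinuousOn P (Set.Icc (0:ℝ) 1))
    (horth : ∀ k < j, ∫ τ in (0:ℝ)..1, P τ * τ ^ k = 0)
    (F : ℝ → ℝ) (M : ℝ)
    (hF : ContDiffOn ℝ (j + 1) F (Set.Icc (0:ℝ) 1))
    (hM : ∀ τ ∈ Set.Icc (0:ℝ) 1,
      |iteratedDerivWithin (j + 1) F (Set.Icc (0:ℝ) 1) τ| ≤ M) :
    |(∫ τ in (0:ℝ)..1, P τ * F τ)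
        - (iteratedDerivWithin j F (Set.Icc (0:ℝ) 1) 0 / j.factorial)
          * ∫ τ in (0:ℝ)..1, P τ * τ ^ j|
      ≤ (M / (j + 1).factorial) * ∫ τ in (0:ℝ)..1, |P τ| := by
  set s : Set ℝ := Set.Icc (0:ℝ) 1 with hs
  have hM0 : 0 ≤ M := le_trans (abs_nonneg _) (hM 0 (by norm_num [hs]))
  have hfactpos : (0:ℝ) < (j + 1).factorial := by positivity
  -- set congruence near points below τ
  have hsets : ∀ τ : ℝ, 0 < τ → τ ≤ 1 → ∀ x : ℝ, x < τ →
      Set.Icc (0:ℝ) τ =ᶠ[nhds x] s := by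
    intro τ hτ0 hτ1 x hx
    have h1 : Set.Iio τ ∈ nhds x := Iio_mem_nhds hx
    filter_upwards [h1] with y hy
    simp only [Set.mem_Icc, Set.mem_Iio, eq_iff_iff, hs]
    constructor
    · rintro ⟨h, h'⟩; exact ⟨h, le_trans h' hτ1⟩
    · rintro ⟨h, _⟩; exact ⟨h, le_of_lt hy⟩
  set T : ℝ → ℝ := fun x => taylorWithinEval F j s 0 x with hT
  -- remainder bound
  have key : ∀ τ ∈ s, |F τ - T τ| ≤ M / (j + 1).factorial := by
    intro τ hτ
    rcases eq_or_lt_of_le hτ.1 with h0 | h0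
    · rw [← h0]
      simp only [hT, taylorWithinEval_self, sub_self, abs_zero]
      positivity
    · -- apply Lagrange remainder on Icc 0 τ
      have hτ1 : τ ≤ 1 := hτ.2
      have hud : UniqueDiffOn ℝ (Set.Icc (0:ℝ) τ) := uniqueDiffOn_Icc h0
      have hsub : Set.Icc (0:ℝ) τ ⊆ s := Set.Icc_subset_Icc le_rfl hτ1
      have hF1 : ContDiffOn ℝ (j + 1) F (Set.Icc (0:ℝ) τ) := hF.mono hsub
      have hFj : ContDiffOn ℝ j F (Set.Icc (0:ℝ) τ) :=
        hF1.of_le (by exact_mod_cast Nat.cast_le.mpr (Nat.le_succ j))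
      have hF' : DifferentiableOn ℝ (iteratedDerivWithin j F (Set.Icc (0:ℝ) τ))
          (Set.Ioo (0:ℝ) τ) :=
        (hF1.differentiableOn_iteratedDerivWithin
          (by exact_mod_cast Nat.lt_succ_self j) hud).mono Set.Ioo_subset_Icc_self
      obtain ⟨x', hx', hrem⟩ := taylor_mean_remainder_lagrange (ne_of_lt h0)
        (by rw [Set.uIcc_of_le h0.le]; exact hFj)
        (by rw [Set.uIcc_of_le h0.le, Set.uIoo_of_le h0.le]; exact hF')
      rw [Set.uIoo_of_le h0.le] at hx'
      rw [Set.uIcc_of_le h0.le] at hrem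
      -- rewrite Taylor polynomial over Icc 0 τ as over s
      have hTeq : taylorWithinEval F j (Set.Icc (0:ℝ) τ) 0 τ = T τ := by
        rw [hT]
        simp only [taylor_within_apply]
        refine Finset.sum_congr rfl fun k _ => ?_
        rw [iteratedDerivWithin_congr_set' (hsets τ h0 hτ1 0 h0) k]
      have hDeq : iteratedDerivWithin (j + 1) F (Set.Icc (0:ℝ) τ) x'
          = iteratedDerivWithin (j + 1) F s x' :=
        iteratedDerivWithin_congr_set' (hsets τ h0 hτ1 x' hx'.2) _
      rw [hTeq, hDeq] at hrem
      rw [hrem]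
      rw [abs_div, abs_mul]
      have hx'mem : x' ∈ s := ⟨le_of_lt hx'.1, le_trans (le_of_lt hx'.2) hτ1⟩
      have h1 : |(τ - 0) ^ (j + 1)| ≤ 1 := by
        rw [sub_zero, abs_pow]
        exact pow_le_one₀ (abs_nonneg _) (by rw [abs_of_nonneg (le_of_lt h0)]; exact hτ1)
      have h2 : |((j + 1).factorial : ℝ)| = (j + 1).factorial := abs_of_pos hfactpos
      rw [h2, div_le_div_iff_of_pos_right hfactpos]
      calc |iteratedDerivWithin (j + 1) F s x'| * |(τ - 0) ^ (j + 1)|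
          ≤ M * 1 := mul_le_mul (hM x' hx'mem) h1 (abs_nonneg _) hM0
        _ = M := mul_one M
  -- continuity / integrability
  have hFc : ContinuousOn F s := hF.continuousOn
  have hTc : Continuous T := by
    rw [hT]
    simp only [taylor_within_apply]
    exact continuous_finset_sum _ fun k _ => by continuity
  have hPF : IntervalIntegrable (fun τ => P τ * F τ) MeasureTheory.volume 0 1 := by
    apply ContinuousOn.intervalIntegrable
    rw [Set.uIcc_of_le (by norm_num : (0:ℝ) ≤ 1)]
    exact hP.mul hFc
  have hPT : IntervalIntegrable (fun τ => P τ * T τ) MeasureTheory.volume 0 1 := by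
    apply ContinuousOn.intervalIntegrable
    rw [Set.uIcc_of_le (by norm_num : (0:ℝ) ≤ 1)]
    exact hP.mul hTc.continuousOn
  have hPabs : IntervalIntegrable (fun τ => |P τ|) MeasureTheory.volume 0 1 := by
    apply ContinuousOn.intervalIntegrable
    rw [Set.uIcc_of_le (by norm_num : (0:ℝ) ≤ 1)]
    exact hP.abs
  -- compute ∫ P*T
  have hint : (∫ τ in (0:ℝ)..1, P τ * T τ)
      = (iteratedDerivWithin j F s 0 / j.factorial) * ∫ τ in (0:ℝ)..1, P τ * τ ^ j := by
    have : (∫ τ in (0:ℝ)..1, P τ * T τ)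
        = ∑ k ∈ Finset.range (j + 1),
          ∫ τ in (0:ℝ)..1, P τ * (((k.factorial : ℝ)⁻¹ * (τ - 0) ^ k)
            * iteratedDerivWithin k F s 0) := by
      rw [← intervalIntegral.integral_finset_sum]
      · congr 1; ext τ
        simp only [hT, taylor_within_apply, Finset.mul_sum, smul_eq_mul]
      · intro k _
        apply ContinuousOn.intervalIntegrable
        rw [Set.uIcc_of_le (by norm_num : (0:ℝ) ≤ 1)]
        exact hP.mul (Continuous.continuousOn (by fun_prop))
    rw [this]
    have hterm : ∀ k ∈ Finset.range (j + 1),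
        (∫ τ in (0:ℝ)..1, P τ * (((k.factorial : ℝ)⁻¹ * (τ - 0) ^ k)
            * iteratedDerivWithin k F s 0))
        = (iteratedDerivWithin k F s 0 / k.factorial) * ∫ τ in (0:ℝ)..1, P τ * τ ^ k := by
      intro k _
      rw [← intervalIntegral.integral_const_mul]
      congr 1; ext τ
      rw [sub_zero]; field_simp
    rw [Finset.sum_congr rfl hterm, Finset.sum_range_succ]
    have : ∀ k ∈ Finset.range j,
        (iteratedDerivWithin k F s 0 / k.factorial) * (∫ τ in (0:ℝ)..1, P τ * τ ^ k) = 0 := by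
      intro k hk
      rw [horth k (Finset.mem_range.mp hk), mul_zero]
    rw [Finset.sum_congr rfl this, Finset.sum_const, smul_zero, zero_add]
  -- final estimate
  have hdiff : (∫ τ in (0:ℝ)..1, P τ * F τ)
      - (iteratedDerivWithin j F s 0 / j.factorial) * (∫ τ in (0:ℝ)..1, P τ * τ ^ j)
      = ∫ τ in (0:ℝ)..1, P τ * (F τ - T τ) := by
    rw [← hint, ← intervalIntegral.integral_sub hPF hPT]
    congr 1; ext τ; ring
  rw [hdiff]
  calc |∫ τ in (0:ℝ)..1, P τ * (F τ - T τ)|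
      ≤ ∫ τ in (0:ℝ)..1, |P τ * (F τ - T τ)| :=
        intervalIntegral.abs_integral_le_integral_abs (by norm_num)
    _ ≤ ∫ τ in (0:ℝ)..1, |P τ| * (M / (j + 1).factorial) := by
        apply intervalIntegral.integral_mono_on (by norm_num)
        · simpa only [← mul_sub] using (hPF.sub hPT).abs
        · exact hPabs.mul_const _
        · intro x hx
          rw [abs_mul]
          exact mul_le_mul_of_nonneg_left (key x hx) (abs_nonneg _)
    _ = (M / (j + 1).factorial) * ∫ τ in (0:ℝ)..1, |P τ| := by
        rw [intervalIntegral.integral_mul_const]; ring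
end

section
/- Let γ be the standard Gaussian measure N(0,1) on ℝ, let k ≥ 1 be an integer, let h ∈ (0, 1/2], set A_h = √(2k |ln h|), and define the truncation ζ_h(x) = x if |x| ≤ A_h, ζ_h(x) = A_h if x > A_h, and ζ_h(x) = −A_h if x < −A_h. Then ∫_ℝ (ζ_h(x) − x)² dγ(x) ≤ h^k. -/
open ProbabilityTheory
open MeasureTheory Real Set Filter
open scoped NNReal ENNReal


lemma rpow_two_eq (x : ℝ) : x ^ (2:ℝ) = x ^ 2 := by
  rw [show (2:ℝ) = ((2:ℕ):ℝ) by norm_num, Real.rpow_natCast]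

lemma Ig : Integrable (fun x : ℝ => x ^ 2 * Real.exp (-x ^ 2 / 2)) := by
  have h := integrable_rpow_mul_exp_neg_mul_sq (b := (1/2:ℝ)) (by norm_num) (s := 2) (by norm_num)
  refine h.congr (Filter.Eventually.of_forall fun x => ?_)
  simp only [rpow_two_eq]
  ring_nf

lemma Ie : Integrable (fun x : ℝ => Real.exp (-x ^ 2 / 2)) := by
  have h := integrable_exp_neg_mul_sq (b := (1/2:ℝ)) (by norm_num)
  refine h.congr (Filter.Eventually.of_forall fun x => ?_)
  ring_nf

lemma Jval : ∫ x in Ioi (0:ℝ), x ^ 2 * Real.exp (-x ^ 2 / 2) = Real.sqrt (2 * π) / 2 := by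
  have hderiv : ∀ x ∈ Ici (0:ℝ), HasDerivAt (fun x : ℝ => -x * Real.exp (-x ^ 2 / 2))
      ((x ^ 2 - 1) * Real.exp (-x ^ 2 / 2)) x := by
    intro x _
    have h1 : HasDerivAt (fun x : ℝ => -x ^ 2 / 2) (-x) x := by
      have := ((hasDerivAt_pow 2 x).neg).div_const 2
      simpa using this.congr_deriv (by ring)
    have h2 : HasDerivAt (fun x : ℝ => Real.exp (-x ^ 2 / 2)) (Real.exp (-x ^ 2 / 2) * (-x)) x :=
      (Real.hasDerivAt_exp _).comp x h1
    have := (hasDerivAt_neg x).mul h2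
    refine this.congr_deriv ?_
    ring
  have hint : IntegrableOn (fun x : ℝ => (x ^ 2 - 1) * Real.exp (-x ^ 2 / 2)) (Ioi 0) := by
    refine ((Ig.sub Ie).integrableOn.congr_fun (fun x _ => by simp [Pi.sub_apply]; ring) measurableSet_Ioi)
  have htend : Tendsto (fun x : ℝ => -x * Real.exp (-x ^ 2 / 2)) atTop (nhds 0) := by
    have h := rpow_mul_exp_neg_mul_sq_isLittleO_exp_neg (b := (1/2:ℝ)) (by norm_num) 1
    have h2 : Tendsto (fun x : ℝ => Real.exp (-(1/2) * x)) atTop (nhds 0) := by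
      apply Real.tendsto_exp_atBot.comp
      exact Filter.Tendsto.const_mul_atTop_of_neg (by norm_num) tendsto_id
    have h3 := h.isBigO.trans_tendsto h2
    have heq : (fun x : ℝ => -x * Real.exp (-x ^ 2 / 2)) =ᶠ[atTop]
        fun x : ℝ => -(x ^ (1:ℝ) * Real.exp (-(1/2) * x ^ 2)) := by
      filter_upwards [eventually_ge_atTop (0:ℝ)] with x hx
      rw [Real.rpow_one]
      ring_nf
    exact Tendsto.congr' heq.symm (by simpa using h3.neg)
  have key := integral_Ioi_of_hasDerivAt_of_tendsto' hderiv hint (by simpa using htend)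
  simp only [neg_zero, zero_mul, sub_zero, mul_zero] at key
  have hsplit : ∫ x in Ioi (0:ℝ), (x ^ 2 - 1) * Real.exp (-x ^ 2 / 2)
      = (∫ x in Ioi (0:ℝ), x ^ 2 * Real.exp (-x ^ 2 / 2))
        - ∫ x in Ioi (0:ℝ), Real.exp (-x ^ 2 / 2) := by
    rw [← integral_sub Ig.integrableOn Ie.integrableOn]
    exact setIntegral_congr_fun measurableSet_Ioi (fun x _ => by ring)
  have hg : ∫ x in Ioi (0:ℝ), Real.exp (-x ^ 2 / 2) = Real.sqrt (2 * π) / 2 := by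
    have := integral_gaussian_Ioi (1/2)
    rw [show π / (1/2 : ℝ) = 2 * π by ring] at this
    rw [← this]
    exact setIntegral_congr_fun measurableSet_Ioi (fun x _ => by ring_nf)
  rw [hsplit] at key
  linarith

lemma shiftIoi (A : ℝ) :
    ∫ x in Ioi A, (x - A) ^ 2 * Real.exp (-(x - A) ^ 2 / 2) = Real.sqrt (2 * π) / 2 := by
  have key := (measurePreserving_add_right (volume : Measure ℝ) A).setIntegral_preimage_emb
    (measurableEmbedding_addRight A)
    (fun y => (y - A) ^ 2 * Real.exp (-(y - A) ^ 2 / 2)) (Ioi A)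
  have hpre : (fun x : ℝ => x + A) ⁻¹' Ioi A = Ioi 0 := by
    ext x; simp [lt_add_iff_pos_left]
  rw [hpre] at key
  rw [← key, ← Jval]
  exact setIntegral_congr_fun measurableSet_Ioi (fun x _ => by simp)

lemma shiftIio (A : ℝ) :
    ∫ x in Iio (-A), (x + A) ^ 2 * Real.exp (-(x + A) ^ 2 / 2) = Real.sqrt (2 * π) / 2 := by
  have key := (Measure.measurePreserving_neg (volume : Measure ℝ)).setIntegral_preimage_emb
    (MeasurableEquiv.neg ℝ).measurableEmbedding
    (fun y => (y + A) ^ 2 * Real.exp (-(y + A) ^ 2 / 2)) (Iio (-A))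
  have hpre : (Neg.neg : ℝ → ℝ) ⁻¹' Iio (-A) = Ioi A := by
    ext x; simp
  rw [hpre] at key
  rw [← key, ← shiftIoi A]
  refine setIntegral_congr_fun measurableSet_Ioi (fun x _ => ?_)
  have h1 : -x + A = -(x - A) := by ring
  simp only [h1, neg_sq]

/-- Lemma 2.3, first estimate: the mean square error of the
truncation of a standard Gaussian at level `A_h = √(2k|ln h|)` is at most `h^k`. -/
theorem gaussian_truncation_l2_error
    (k : ℕ) (hk : 1 ≤ k) (h : ℝ) (hh : h ∈ Set.Ioc (0:ℝ) (1/2))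
    (A : ℝ) (hA : A = Real.sqrt (2 * k * |Real.log h|))
    (ζ : ℝ → ℝ)
    (hζ : ∀ x, ζ x = if |x| ≤ A then x else if x > A then A else -A) :
    ∫ x, (ζ x - x) ^ 2 ∂(gaussianReal 0 1) ≤ h ^ k := by
  obtain ⟨hh0, hh2⟩ := hh
  have hlog : Real.log h < 0 := Real.log_neg hh0 (by linarith)
  have habs : |Real.log h| = -Real.log h := abs_of_neg hlog
  have hA0 : 0 < A := by
    rw [hA]
    apply Real.sqrt_pos.2
    have : (1:ℝ) ≤ (k:ℝ) := by exact_mod_cast hk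
    nlinarith [abs_pos.2 hlog.ne]
  have hAsq : A ^ 2 = 2 * k * |Real.log h| := by
    rw [hA, Real.sq_sqrt (by positivity)]
  -- h ^ k = exp (-A^2/2)
  have hexp : Real.exp (-A ^ 2 / 2) = h ^ k := by
    rw [hAsq, habs]
    rw [show -(2 * (k:ℝ) * -Real.log h) / 2 = (k:ℝ) * Real.log h by ring]
    rw [Real.exp_nat_mul, Real.exp_log hh0]
  -- convert integral to Lebesgue
  have hpdf : ∀ x : ℝ, gaussianPDFReal 0 1 x = (Real.sqrt (2 * π))⁻¹ * Real.exp (-x ^ 2 / 2) := by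
    intro x
    simp [gaussianPDFReal]
  have hconv : ∫ x, (ζ x - x) ^ 2 ∂(gaussianReal 0 1)
      = ∫ x, gaussianPDFReal 0 1 x * (ζ x - x) ^ 2 := by
    rw [gaussianReal_of_var_ne_zero 0 one_ne_zero]
    have : (gaussianPDF 0 1) = fun x => ((Real.toNNReal (gaussianPDFReal 0 1 x) : ℝ≥0) : ℝ≥0∞) :=
      rfl
    rw [this, integral_withDensity_eq_integral_smul
      ((measurable_gaussianPDFReal 0 1).real_toNNReal)]
    congr 1
    ext x
    rw [NNReal.smul_def, Real.coe_toNNReal _ (gaussianPDFReal_nonneg 0 1 x)]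
    rfl
  rw [hconv]
  set c := Real.exp (-A ^ 2 / 2) with hc
  set K := (Real.sqrt (2 * π))⁻¹ with hK
  have hKpos : 0 < K := by
    rw [hK]
    have : (0:ℝ) < Real.sqrt (2 * π) := Real.sqrt_pos.2 (by positivity)
    positivity
  set G : ℝ → ℝ := fun x => K * c *
      (Set.indicator (Ioi A) (fun x => (x - A) ^ 2 * Real.exp (-(x - A) ^ 2 / 2)) x
       + Set.indicator (Iio (-A)) (fun x => (x + A) ^ 2 * Real.exp (-(x + A) ^ 2 / 2)) x)
    with hG
  have comp_int : ∀ B : ℝ, Integrable (fun x : ℝ => (x + B) ^ 2 * Real.exp (-(x + B) ^ 2 / 2)) := by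
    intro B
    exact ((measurePreserving_add_right (volume : Measure ℝ) B).integrable_comp_emb
      (measurableEmbedding_addRight B)).2 Ig
  have hGint : Integrable G := by
    apply Integrable.const_mul
    apply Integrable.add
    · refine Integrable.indicator ?_ measurableSet_Ioi
      refine (comp_int (-A)).congr (Filter.Eventually.of_forall fun x => ?_)
      ring_nf
    · exact (comp_int A).indicator measurableSet_Iio
  -- pointwise bound
  have hbound : ∀ x : ℝ, gaussianPDFReal 0 1 x * (ζ x - x) ^ 2 ≤ G x := by
    intro x
    have hind1 : 0 ≤ Set.indicator (Ioi A) (fun x => (x - A) ^ 2 * Real.exp (-(x - A) ^ 2 / 2)) x :=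
      Set.indicator_nonneg (fun y _ => by positivity) x
    have hind2 : 0 ≤ Set.indicator (Iio (-A)) (fun x => (x + A) ^ 2 * Real.exp (-(x + A) ^ 2 / 2)) x :=
      Set.indicator_nonneg (fun y _ => by positivity) x
    rw [hpdf, hζ x, hG]
    rcases le_or_gt |x| A with hxA | hxA
    · rw [if_pos hxA, sub_self]
      have h0 : ((0:ℝ)) ^ 2 = 0 := by norm_num
      rw [h0, mul_zero]
      exact mul_nonneg (by positivity) (add_nonneg hind1 hind2)
    · rcases lt_or_ge A x with hx | hx
      · -- x > A
        have hxA' : x > A := hx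
        simp only [if_neg (not_le.2 hxA), if_pos hxA']
        have hin : x ∈ Ioi A := hx
        rw [Set.indicator_of_mem hin]
        have hout : x ∉ Iio (-A) := by
          simp only [mem_Iio, not_lt]
          linarith
        rw [Set.indicator_of_notMem hout, add_zero]
        have hexp_le : Real.exp (-x ^ 2 / 2) ≤ c * Real.exp (-(x - A) ^ 2 / 2) := by
          rw [hc, ← Real.exp_add]
          apply Real.exp_le_exp.2
          nlinarith
        calc K * Real.exp (-x ^ 2 / 2) * (A - x) ^ 2
            ≤ K * (c * Real.exp (-(x - A) ^ 2 / 2)) * (A - x) ^ 2 := by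
              apply mul_le_mul_of_nonneg_right (mul_le_mul_of_nonneg_left hexp_le hKpos.le)
              positivity
          _ = K * c * ((x - A) ^ 2 * Real.exp (-(x - A) ^ 2 / 2)) := by ring
      · -- x < -A
        have hxlt : x < -A := by
          by_contra hcon
          push_neg at hcon
          exact absurd (abs_le.2 ⟨hcon, hx⟩) (not_le.2 hxA)
        have hnotgt : ¬ (x > A) := not_lt.2 hx
        simp only [if_neg (not_le.2 hxA), if_neg hnotgt]
        have hin : x ∈ Iio (-A) := hxlt
        rw [Set.indicator_of_mem hin]
        have hout : x ∉ Ioi A := by simp only [mem_Ioi, not_lt]; exact hx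
        rw [Set.indicator_of_notMem hout, zero_add]
        have hexp_le : Real.exp (-x ^ 2 / 2) ≤ c * Real.exp (-(x + A) ^ 2 / 2) := by
          rw [hc, ← Real.exp_add]
          apply Real.exp_le_exp.2
          nlinarith
        calc K * Real.exp (-x ^ 2 / 2) * (-A - x) ^ 2
            ≤ K * (c * Real.exp (-(x + A) ^ 2 / 2)) * (-A - x) ^ 2 := by
              apply mul_le_mul_of_nonneg_right (mul_le_mul_of_nonneg_left hexp_le hKpos.le)
              positivity
          _ = K * c * ((x + A) ^ 2 * Real.exp (-(x + A) ^ 2 / 2)) := by ring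
  have hmono : ∫ x, gaussianPDFReal 0 1 x * (ζ x - x) ^ 2 ≤ ∫ x, G x := by
    apply integral_mono_of_nonneg
    · exact Filter.Eventually.of_forall fun x =>
        mul_nonneg (gaussianPDFReal_nonneg 0 1 x) (sq_nonneg _)
    · exact hGint
    · exact Filter.Eventually.of_forall hbound
  have hGval : ∫ x, G x = c := by
    rw [hG]
    simp only []
    rw [integral_const_mul]
    rw [integral_add
      (((comp_int (-A)).congr (Filter.Eventually.of_forall fun x => by
        ring_nf)).indicator measurableSet_Ioi)
      ((comp_int A).indicator measurableSet_Iio)]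
    rw [integral_indicator measurableSet_Ioi, integral_indicator measurableSet_Iio]
    rw [shiftIoi A, shiftIio A]
    have hs : Real.sqrt (2 * π) ≠ 0 := by
      have : (0:ℝ) < Real.sqrt (2 * π) := Real.sqrt_pos.2 (by positivity)
      exact this.ne'
    rw [hK]
    field_simp
    ring
  calc ∫ x, gaussianPDFReal 0 1 x * (ζ x - x) ^ 2 ≤ ∫ x, G x := hmono
    _ = c := hGval
    _ = h ^ k := hexp
end

section
/- Let q ≥ 1 and M ≥ 1 be integers, let c₁, …, c_M ∈ [0,1] and b₁, …, b_M ∈ ℝ satisfy Σ_{i=1}^M b_i c_i^j = 1/(j+1) for 0 ≤ j ≤ q−1. Let G : ℝ^m → ℝ be q times continuously differentiable with sup_{x∈ℝ^m} ‖D^q G(x)‖ ≤ K, where ‖D^q G(x)‖ is the operator norm of the q-th derivative of G at x as a q-multilinear map on ℝ^m. For y, Ỹ ∈ ℝ^m let σ(τ) = y + τ(Ỹ − y). Then |∫₀¹ G(σ(τ)) dτ − Σ_{i=1}^M b_i G(σ(c_i))| ≤ (1 + Σ_{i=1}^M |b_i|) K |Ỹ − y|^q / q!. -/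
open Set Finset

lemma my_iteratedFDeriv_comp_const_add {E F : Type*} [NormedAddCommGroup E] [NormedSpace ℝ E]
    [NormedAddCommGroup F] [NormedSpace ℝ F] {N : ℕ} {f : E → F} (hf : ContDiff ℝ N f) (a : E) :
    ∀ m : ℕ, m ≤ N → ∀ x : E,
      iteratedFDeriv ℝ m (fun z => f (a + z)) x = iteratedFDeriv ℝ m f (a + x) := by
  intro m
  induction m with
  | zero => intro _ x; ext u; simp
  | succ k IH =>
    intro hk x
    have hk' : k ≤ N := Nat.le_of_succ_le hk
    have hdk : Differentiable ℝ (iteratedFDeriv ℝ k f) :=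
      hf.differentiable_iteratedFDeriv (by exact_mod_cast hk)
    have h1 : iteratedFDeriv ℝ k (fun z => f (a + z)) = fun z => iteratedFDeriv ℝ k f (a + z) :=
      funext (IH hk')
    have h2 : HasFDerivAt (fun z => iteratedFDeriv ℝ k f (a + z))
        (fderiv ℝ (iteratedFDeriv ℝ k f) (a + x)) x := by
      have := ((hdk (a + x)).hasFDerivAt).comp x ((hasFDerivAt_id x).const_add a)
      simpa [Function.comp_def] using this
    ext u
    rw [iteratedFDeriv_succ_apply_left, iteratedFDeriv_succ_apply_left, h1, h2.fderiv]

lemma my_iteratedFDerivWithin_eq {E F : Type*} [NormedAddCommGroup E] [NormedSpace ℝ E]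
    [NormedAddCommGroup F] [NormedSpace ℝ F] {N : ℕ} {f : E → F} (hf : ContDiff ℝ N f)
    {s : Set E} (hs : UniqueDiffOn ℝ s) :
    ∀ m : ℕ, m ≤ N → ∀ x ∈ s, iteratedFDerivWithin ℝ m f s x = iteratedFDeriv ℝ m f x := by
  intro m
  induction m with
  | zero => intro _ x _; ext u; simp
  | succ k IH =>
    intro hk x hx
    have hk' : k ≤ N := Nat.le_of_succ_le hk
    have hdk : Differentiable ℝ (iteratedFDeriv ℝ k f) :=
      hf.differentiable_iteratedFDeriv (by exact_mod_cast hk)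
    have h1 : fderivWithin ℝ (iteratedFDerivWithin ℝ k f s) s x
        = fderivWithin ℝ (iteratedFDeriv ℝ k f) s x :=
      fderivWithin_congr (fun z hz => IH hk' z hz) (IH hk' x hx)
    have h2 : fderivWithin ℝ (iteratedFDeriv ℝ k f) s x = fderiv ℝ (iteratedFDeriv ℝ k f) x :=
      (hdk x).fderivWithin (hs x hx)
    ext u
    rw [iteratedFDerivWithin_succ_apply_left, iteratedFDeriv_succ_apply_left, h1, h2]

lemma my_iteratedDerivWithin_eq {N : ℕ} {f : ℝ → ℝ} (hf : ContDiff ℝ N f)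
    {s : Set ℝ} (hs : UniqueDiffOn ℝ s) {m : ℕ} (hm : m ≤ N) {x : ℝ} (hx : x ∈ s) :
    iteratedDerivWithin m f s x = iteratedDeriv m f x := by
  rw [iteratedDerivWithin, iteratedDeriv, my_iteratedFDerivWithin_eq hf hs m hm x hx]



/-- deterministic core of Lemma 4.2, (4.9)–(4.10): the error of an
order-`q` quadrature rule applied to the line integral `∫₀¹ G(σ(τ)) dτ` along the
segment `σ(τ) = y + τ(Ỹ − y)` is at most `(1 + Σ|b_i|) K |Ỹ − y|^q / q!` when
`‖D^q G‖ ≤ K` everywhere. -/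
theorem quadrature_line_integral_error_bound
    (q M m : ℕ) (hq : 1 ≤ q) (hM : 1 ≤ M)
    (c b : Fin M → ℝ) (hc : ∀ i, c i ∈ Set.Icc (0:ℝ) 1)
    (hquad : ∀ j < q, ∑ i, b i * c i ^ j = 1 / ((j : ℝ) + 1))
    (G : EuclideanSpace ℝ (Fin m) → ℝ) (K : ℝ)
    (hG : ContDiff ℝ q G)
    (hK : ∀ x, ‖iteratedFDeriv ℝ q G x‖ ≤ K)
    (y Yt : EuclideanSpace ℝ (Fin m)) :
    |(∫ τ in (0:ℝ)..1, G (y + τ • (Yt - y))) - ∑ i, b i * G (y + c i • (Yt - y))|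
      ≤ (1 + ∑ i, |b i|) * K * ‖Yt - y‖ ^ q / q.factorial := by
  obtain ⟨n, rfl⟩ : ∃ n, q = n + 1 := ⟨q - 1, (Nat.succ_pred_eq_of_pos hq).symm⟩
  set v : EuclideanSpace ℝ (Fin m) := Yt - y with hv
  set g : ℝ → ℝ := fun τ => G (y + τ • v) with hgdef
  set L : ℝ →L[ℝ] EuclideanSpace ℝ (Fin m) := ContinuousLinearMap.toSpanSingleton ℝ v with hLdef
  have hgL : g = (fun z => G (y + z)) ∘ L := by
    funext τ
    simp [hgdef, Function.comp, hLdef, ContinuousLinearMap.toSpanSingleton_apply]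
  have hGy : ContDiff ℝ (n + 1) (fun z => G (y + z)) :=
    hG.comp (contDiff_const.add contDiff_id)
  have hg : ContDiff ℝ (n + 1) g := by
    rw [hgL]; exact hGy.comp L.contDiff
  set C : ℝ := K * ‖v‖ ^ (n + 1) with hCdef
  have hK0 : 0 ≤ K := le_trans (norm_nonneg _) (hK 0)
  have hC0 : 0 ≤ C := mul_nonneg hK0 (pow_nonneg (norm_nonneg _) _)
  -- bound on the (n+1)-st derivative of g
  have hbound : ∀ τ : ℝ, |iteratedDeriv (n + 1) g τ| ≤ C := by
    intro τ
    have h1 : iteratedFDeriv ℝ (n + 1) g τ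
        = (iteratedFDeriv ℝ (n + 1) (fun z => G (y + z)) (L τ)).compContinuousLinearMap
            (fun _ => L) := by
      rw [hgL]
      exact L.iteratedFDeriv_comp_right hGy τ le_rfl
    have h2 : ‖iteratedFDeriv ℝ (n + 1) g τ‖
        ≤ ‖iteratedFDeriv ℝ (n + 1) (fun z => G (y + z)) (L τ)‖ * ∏ _i : Fin (n + 1), ‖L‖ := by
      rw [h1]
      exact ContinuousMultilinearMap.norm_compContinuousLinearMap_le _ _
    have h3 : ‖iteratedFDeriv ℝ (n + 1) (fun z => G (y + z)) (L τ)‖ ≤ K := by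
      rw [my_iteratedFDeriv_comp_const_add hG y (n + 1) le_rfl (L τ)]
      exact hK _
    have h4 : (∏ _i : Fin (n + 1), ‖L‖) = ‖v‖ ^ (n + 1) := by
      rw [Finset.prod_const, ContinuousLinearMap.norm_toSpanSingleton]
      simp
    rw [← Real.norm_eq_abs, ← norm_iteratedFDeriv_eq_norm_iteratedDeriv]
    calc ‖iteratedFDeriv ℝ (n + 1) g τ‖
        ≤ ‖iteratedFDeriv ℝ (n + 1) (fun z => G (y + z)) (L τ)‖ * ∏ _i : Fin (n + 1), ‖L‖ := h2
      _ ≤ K * ‖v‖ ^ (n + 1) := by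
          rw [h4]
          exact mul_le_mul_of_nonneg_right h3 (pow_nonneg (norm_nonneg _) _)
  -- the Taylor polynomial of g at 0
  set d : ℕ → ℝ := fun k => iteratedDeriv k g 0 with hddef
  set P : ℝ → ℝ := fun x => ∑ k ∈ Finset.range (n + 1), d k / k.factorial * x ^ k with hPdef
  -- remainder bound
  have hrem : ∀ x ∈ Icc (0:ℝ) 1, |g x - P x| ≤ C / (n + 1).factorial := by
    intro x hx
    rcases eq_or_lt_of_le hx.1 with h0 | h0
    · -- x = 0
      have : P 0 = g 0 := by
        simp only [hPdef]
        rw [Finset.sum_eq_single 0]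
        · simp [hddef]
        · intro k _ hk
          simp [zero_pow hk]
        · simp
      rw [← h0, this]
      simp [div_nonneg hC0 (Nat.cast_nonneg _)]
    · -- 0 < x
      have hf : ContDiffOn ℝ n g (Icc 0 x) :=
        (hg.of_le (by exact_mod_cast Nat.le_succ n)).contDiffOn
      have hUD : UniqueDiffOn ℝ (Icc (0:ℝ) x) := uniqueDiffOn_Icc h0
      have hf' : DifferentiableOn ℝ (iteratedDerivWithin n g (Icc 0 x)) (Ioo 0 x) := by
        apply DifferentiableOn.congr
          ((hg.differentiable_iteratedDeriv n (by exact_mod_cast Nat.lt_succ_self n)).differentiableOn)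
        intro z hz
        exact my_iteratedDerivWithin_eq hg hUD (Nat.le_succ n) (Ioo_subset_Icc_self hz)
      obtain ⟨x', hx', heq⟩ := taylor_mean_remainder_lagrange h0.ne
        (by rwa [uIcc_of_le h0.le]) (by rwa [uIcc_of_le h0.le, uIoo_of_le h0.le])
      rw [uIoo_of_le h0.le] at hx'
      rw [uIcc_of_le h0.le] at heq
      have hP : taylorWithinEval g n (Icc 0 x) 0 x = P x := by
        rw [taylor_within_apply]; simp only [hPdef]
        apply Finset.sum_congr rfl
        intro k hk
        rw [my_iteratedDerivWithin_eq hg hUD (Nat.le_succ_of_le (Finset.mem_range_succ_iff.mp hk))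
            (left_mem_Icc.mpr h0.le)]
        rw [smul_eq_mul]
        ring
      have hd' : iteratedDerivWithin (n + 1) g (Icc 0 x) x' = iteratedDeriv (n + 1) g x' :=
        my_iteratedDerivWithin_eq hg hUD le_rfl (Ioo_subset_Icc_self hx')
      rw [← hP, heq, hd']
      have hx1 : x ^ (n + 1) ≤ 1 := pow_le_one₀ h0.le hx.2
      calc |iteratedDeriv (n + 1) g x' * (x - 0) ^ (n + 1) / (n + 1).factorial|
          = |iteratedDeriv (n + 1) g x'| * x ^ (n + 1) / (n + 1).factorial := by
            rw [abs_div, abs_mul, sub_zero, abs_pow, abs_of_pos h0, Nat.abs_cast]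
        _ ≤ C * 1 / (n + 1).factorial := by
            apply div_le_div_of_nonneg_right _ (by positivity)
            exact mul_le_mul (hbound x') hx1 (by positivity) hC0
        _ = C / (n + 1).factorial := by ring
  -- integrability and continuity
  have hgc : Continuous g := hg.continuous
  have hPc : Continuous P := by
    apply continuous_finset_sum
    intro k _
    exact (continuous_const.mul (continuous_pow k))
  -- integral of P equals the quadrature applied to P
  have hPint : (∫ τ in (0:ℝ)..1, P τ) = ∑ k ∈ Finset.range (n + 1), d k / k.factorial * (1 / (k + 1)) := by
    simp only [hPdef]
    rw [intervalIntegral.integral_finset_sum]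
    · apply Finset.sum_congr rfl
      intro k _
      rw [intervalIntegral.integral_const_mul, integral_pow]
      norm_num
    · intro k _
      exact (continuous_const.mul (continuous_pow k)).intervalIntegrable _ _
  have hPquad : ∑ i, b i * P (c i) = ∑ k ∈ Finset.range (n + 1), d k / k.factorial * (1 / (k + 1)) := by
    have : ∀ i, b i * P (c i) = ∑ k ∈ Finset.range (n + 1), d k / k.factorial * (b i * c i ^ k) := by
      intro i
      simp only [hPdef]; rw [Finset.mul_sum]
      apply Finset.sum_congr rfl
      intro k _
      ring
    simp_rw [this]
    rw [Finset.sum_comm]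
    apply Finset.sum_congr rfl
    intro k hk
    rw [← Finset.mul_sum, hquad k (Finset.mem_range.mp hk)]
  have hPeq : (∫ τ in (0:ℝ)..1, P τ) = ∑ i, b i * P (c i) := by rw [hPint, hPquad]
  -- main estimate
  have hInt : (∫ τ in (0:ℝ)..1, g τ) - (∫ τ in (0:ℝ)..1, P τ) = ∫ τ in (0:ℝ)..1, (g τ - P τ) :=
    (intervalIntegral.integral_sub (hgc.intervalIntegrable _ _) (hPc.intervalIntegrable _ _)).symm
  have hIbound : |∫ τ in (0:ℝ)..1, (g τ - P τ)| ≤ C / (n + 1).factorial := by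
    have := intervalIntegral.norm_integral_le_of_norm_le_const
      (a := (0:ℝ)) (b := 1) (C := C / (n + 1).factorial) (f := fun τ => g τ - P τ) ?_
    · simpa using this
    · intro z hz
      rw [uIoc_of_le (by norm_num : (0:ℝ) ≤ 1)] at hz
      exact hrem z (Ioc_subset_Icc_self hz)
  have hSbound : |∑ i, b i * g (c i) - ∑ i, b i * P (c i)| ≤ (∑ i, |b i|) * (C / (n + 1).factorial) := by
    rw [← Finset.sum_sub_distrib]
    calc |∑ i, (b i * g (c i) - b i * P (c i))|
        ≤ ∑ i, |b i * g (c i) - b i * P (c i)| := Finset.abs_sum_le_sum_abs _ _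
      _ ≤ ∑ i, |b i| * (C / (n + 1).factorial) := by
          apply Finset.sum_le_sum
          intro i _
          rw [← mul_sub, abs_mul]
          exact mul_le_mul_of_nonneg_left (hrem (c i) (hc i)) (abs_nonneg _)
      _ = (∑ i, |b i|) * (C / (n + 1).factorial) := by rw [← Finset.sum_mul]
  -- assemble
  have key : |(∫ τ in (0:ℝ)..1, g τ) - ∑ i, b i * g (c i)|
      ≤ C / (n + 1).factorial + (∑ i, |b i|) * (C / (n + 1).factorial) := by
    have hrw : (∫ τ in (0:ℝ)..1, g τ) - ∑ i, b i * g (c i)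
        = (∫ τ in (0:ℝ)..1, (g τ - P τ)) - (∑ i, b i * g (c i) - ∑ i, b i * P (c i)) := by
      rw [← hInt, hPeq]; ring
    rw [hrw]
    exact le_trans (abs_sub _ _) (add_le_add hIbound hSbound)
  have hfinal : C / (n + 1).factorial + (∑ i, |b i|) * (C / (n + 1).factorial)
      = (1 + ∑ i, |b i|) * K * ‖v‖ ^ (n + 1) / (n + 1).factorial := by
    rw [hCdef]; ring
  calc |(∫ τ in (0:ℝ)..1, G (y + τ • (Yt - y))) - ∑ i, b i * G (y + c i • (Yt - y))|
      = |(∫ τ in (0:ℝ)..1, g τ) - ∑ i, b i * g (c i)| := rfl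
    _ ≤ C / (n + 1).factorial + (∑ i, |b i|) * (C / (n + 1).factorial) := key
    _ = (1 + ∑ i, |b i|) * K * ‖v‖ ^ (n + 1) / (n + 1).factorial := hfinal
end

section
/- Let L : ℝ^m → ℝ^ν be continuously differentiable, f, g₁, …, g_D : ℝ^m → ℝ^m continuous, M ≥ 1 an integer, c₁, …, c_M ∈ [0,1] and b₁, …, b_M ∈ ℝ. Fix y, Ỹ ∈ ℝ^m, reals h, w₁, …, w_D, vectors α₀, …, α_D ∈ ℝ^ν, set σ(τ) = y + τ(Ỹ − y), and define Ψ = ∫₀¹ ∇L(σ(τ)) dτ − Σ_{i=1}^M b_i ∇L(σ(c_i)) ∈ ℝ^{ν×m}. Suppose the quadrature MAVF scheme equations hold: (i) Ỹ = y + h[Σ_i b_i f(σ(c_i)) − Σ_i b_i ∇L(σ(c_i))ᵀ α₀] + Σ_{r=1}^D w_r [Σ_i b_i g_r(σ(c_i)) − Σ_i b_i ∇L(σ(c_i))ᵀ α_r]; (ii) (Σ_i b_i ∇L(σ(c_i)))(Σ_i b_i ∇L(σ(c_i))ᵀ) α₀ = (Σ_i b_i ∇L(σ(c_i)))(Σ_i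 b_i f(σ(c_i))); (iii) for each r = 1, …, D, (Σ_i b_i ∇L(σ(c_i)))(Σ_i b_i ∇L(σ(c_i))ᵀ) α_r = (Σ_i b_i ∇L(σ(c_i)))(Σ_i b_i g_r(σ(c_i))). Then L(Ỹ) − L(y) = h Ψ [Σ_i b_i f(σ(c_i)) − Σ_i b_i ∇L(σ(c_i))ᵀ α₀] + Σ_{r=1}^D w_r Ψ [Σ_i b_i g_r(σ(c_i)) − Σ_i b_i ∇L(σ(c_i))ᵀ α_r]. -/
open Matrix MeasureTheory

/-- identity (4.27): for the quadrature MAVF scheme, the deviation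
of the invariant `L` over one step is exactly expressed through the quadrature
defect `Ψ` of the Jacobian `∇L` along the segment. -/
theorem quadrature_mavf_invariant_deviation_identity
    (m ν D M : ℕ) (hM : 1 ≤ M)
    (L : (Fin m → ℝ) → (Fin ν → ℝ)) (hL : ContDiff ℝ 1 L)
    (f : (Fin m → ℝ) → (Fin m → ℝ)) (g : Fin D → (Fin m → ℝ) → (Fin m → ℝ))
    (hf : Continuous f) (hg : ∀ r, Continuous (g r))
    (c b : Fin M → ℝ) (hc : ∀ i, c i ∈ Set.Icc (0:ℝ) 1)
    (y Yt : Fin m → ℝ) (h : ℝ) (w : Fin D → ℝ)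
    (α₀ : Fin ν → ℝ) (α : Fin D → Fin ν → ℝ)
    (σ : ℝ → (Fin m → ℝ)) (hσ : ∀ τ, σ τ = y + τ • (Yt - y))
    -- `J x` is the ν×m Jacobian matrix of `L` at `x`
    (J : (Fin m → ℝ) → Matrix (Fin ν) (Fin m) ℝ)
    (hJ : ∀ x i l, J x i l = fderiv ℝ L x (Pi.single l 1) i)
    -- `Ψ = ∫₀¹ ∇L(σ(τ)) dτ − Σ_i b_i ∇L(σ(c_i))` (componentwise)
    (Ψ : Matrix (Fin ν) (Fin m) ℝ)
    (hΨ : ∀ i l, Ψ i l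
      = (∫ τ in (0:ℝ)..1, J (σ τ) i l) - ∑ i', b i' * J (σ (c i')) i l)
    -- quadrature approximations of the integrals in the scheme
    (B : Matrix (Fin ν) (Fin m) ℝ) (hB : B = ∑ i, b i • J (σ (c i)))
    (F : Fin m → ℝ) (hF : F = ∑ i, b i • f (σ (c i)))
    (G : Fin D → Fin m → ℝ) (hG : ∀ r, G r = ∑ i, b i • g r (σ (c i)))
    -- the quadrature MAVF scheme equations (i), (ii), (iii)
    (heq1 : Yt = y + h • (F - Bᵀ.mulVec α₀) + ∑ r, w r • (G r - Bᵀ.mulVec (α r)))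
    (heq2 : (B * Bᵀ).mulVec α₀ = B.mulVec F)
    (heq3 : ∀ r, (B * Bᵀ).mulVec (α r) = B.mulVec (G r)) :
    L Yt - L y
      = h • Ψ.mulVec (F - Bᵀ.mulVec α₀)
        + ∑ r, w r • Ψ.mulVec (G r - Bᵀ.mulVec (α r)) := by
  classical
  set d : Fin m → ℝ := Yt - y with hd
  have hσf : σ = fun τ => y + τ • d := funext hσ
  have hσc : Continuous σ := by
    rw [hσf]
    exact continuous_const.add (continuous_id.smul continuous_const)
  have hfc : Continuous (fun x => fderiv ℝ L x) := hL.continuous_fderiv one_ne_zero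
  have hdiff : Differentiable ℝ L := hL.differentiable one_ne_zero
  -- derivative of L ∘ σ
  have hderiv : ∀ τ : ℝ, HasDerivAt (fun t => L (σ t)) (fderiv ℝ L (σ τ) d) τ := by
    intro τ
    have h1 : HasDerivAt σ d τ := by
      rw [hσf]
      simpa using ((hasDerivAt_id τ).smul_const d).const_add y
    exact (hdiff (σ τ)).hasFDerivAt.comp_hasDerivAt τ h1
  -- continuity of integrands
  have hcont : ∀ i l, Continuous (fun τ => J (σ τ) i l) := by
    intro i l
    have : Continuous (fun τ => fderiv ℝ L (σ τ) (Pi.single l 1)) :=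
      (hfc.comp hσc).clm_apply continuous_const
    have := (continuous_apply i).comp this
    simpa [hJ, Function.comp_def] using this
  -- FTC componentwise
  have key : ∀ i, L Yt i - L y i = ∑ l, (∫ τ in (0:ℝ)..1, J (σ τ) i l) * d l := by
    intro i
    have hder : ∀ τ ∈ Set.uIcc (0:ℝ) 1,
        HasDerivAt (fun t => L (σ t) i) (fderiv ℝ L (σ τ) d i) τ := by
      intro τ _
      exact ((ContinuousLinearMap.proj i : (Fin ν → ℝ) →L[ℝ] ℝ).hasFDerivAt).comp_hasDerivAt τ
        (hderiv τ)
    have hcont' : Continuous (fun τ => fderiv ℝ L (σ τ) d i) :=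
      (continuous_apply i).comp ((hfc.comp hσc).clm_apply continuous_const)
    have hint : IntervalIntegrable (fun τ => fderiv ℝ L (σ τ) d i) volume 0 1 :=
      hcont'.intervalIntegrable 0 1
    have hftc := intervalIntegral.integral_eq_sub_of_hasDerivAt hder hint
    have hσ0 : σ 0 = y := by rw [hσf]; simp
    have hσ1 : σ 1 = Yt := by rw [hσf]; simp [hd]
    rw [hσ0, hσ1] at hftc
    -- expand fderiv applied to d
    have hexp : ∀ x, fderiv ℝ L x d i = ∑ l, J x i l * d l := by
      intro x
      have hdsum : d = ∑ l, d l • (Pi.single l 1 : Fin m → ℝ) := by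
        funext j
        simp [Finset.sum_apply, Pi.single_apply]
      have : fderiv ℝ L x d i = fderiv ℝ L x (∑ l, d l • (Pi.single l 1 : Fin m → ℝ)) i := by
        rw [← hdsum]
      rw [this, map_sum]
      simp only [_root_.map_smul]
      rw [Finset.sum_apply]
      simp [hJ, mul_comm]
    calc L Yt i - L y i = ∫ τ in (0:ℝ)..1, fderiv ℝ L (σ τ) d i := hftc.symm
      _ = ∫ τ in (0:ℝ)..1, ∑ l, J (σ τ) i l * d l := by
            refine intervalIntegral.integral_congr ?_
            intro τ _; exact hexp (σ τ)
      _ = ∑ l, ∫ τ in (0:ℝ)..1, J (σ τ) i l * d l := by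
            refine intervalIntegral.integral_finset_sum ?_
            intro l _
            exact ((hcont i l).mul continuous_const).intervalIntegrable 0 1
      _ = ∑ l, (∫ τ in (0:ℝ)..1, J (σ τ) i l) * d l := by
            refine Finset.sum_congr rfl fun l _ => ?_
            rw [intervalIntegral.integral_mul_const]
  -- the integral matrix A
  set A : Matrix (Fin ν) (Fin m) ℝ := fun i l => ∫ τ in (0:ℝ)..1, J (σ τ) i l with hA
  have hLd : L Yt - L y = A.mulVec d := by
    funext i
    simpa [Matrix.mulVec, dotProduct, hA] using key i
  have hΨAB : Ψ = A - B := by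
    ext i l
    rw [hΨ i l, hB]
    change _ = (∫ τ in (0:ℝ)..1, J (σ τ) i l) - (∑ i, b i • J (σ (c i))) i l
    simp [Matrix.sub_apply, hA, Matrix.sum_apply, Matrix.smul_apply]
  -- B annihilates the projected residuals
  have hB0 : B.mulVec (F - Bᵀ.mulVec α₀) = 0 := by
    rw [Matrix.mulVec_sub, Matrix.mulVec_mulVec, heq2, sub_self]
  have hBr : ∀ r, B.mulVec (G r - Bᵀ.mulVec (α r)) = 0 := by
    intro r
    rw [Matrix.mulVec_sub, Matrix.mulVec_mulVec, heq3 r, sub_self]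
  have hdval : d = h • (F - Bᵀ.mulVec α₀) + ∑ r, w r • (G r - Bᵀ.mulVec (α r)) := by
    rw [hd, heq1]; abel
  have hlin : ∀ C : Matrix (Fin ν) (Fin m) ℝ,
      C.mulVec d = h • C.mulVec (F - Bᵀ.mulVec α₀)
        + ∑ r, w r • C.mulVec (G r - Bᵀ.mulVec (α r)) := by
    intro C
    rw [hdval]
    simp only [← Matrix.mulVecLin_apply, map_add, _root_.map_smul, map_sum]
  have hAΨ : A = Ψ + B := by rw [hΨAB]; abel
  rw [hLd, hAΨ, Matrix.add_mulVec, hlin Ψ, hlin B, hB0]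
  simp [hBr]
end

section
/- In the setting of the quadrature MAVF scheme: let L : ℝ^m → ℝ^ν be continuously differentiable, f, g₁, …, g_D : ℝ^m → ℝ^m continuous, and let the quadrature rule (c_i, b_i)_{i=1}^M with c_i ∈ [0,1] have order q ≥ 1, i.e., Σ_i b_i c_i^j = 1/(j+1) for 0 ≤ j ≤ q−1. Fix y, Ỹ ∈ ℝ^m, reals h, w₁, …, w_D, vectors α₀, …, α_D ∈ ℝ^ν satisfying the quadrature MAVF scheme equations (i)–(iii) with σ(τ) = y + τ(Ỹ − y). If every entry of the Jacobian matrix ∇L : ℝ^m → ℝ^{ν×m} is a polynomial function of degree ≤ q−1, then L(Ỹ) = L(y). -/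
open Matrix MeasureTheory Polynomial

lemma quad_exact_aux {M q : ℕ} (c b : Fin M → ℝ)
    (hquad : ∀ j < q, ∑ i, b i * c i ^ j = 1 / ((j : ℝ) + 1))
    (P : Polynomial ℝ) (hP : P.natDegree < q) :
    ∫ τ in (0:ℝ)..1, P.eval τ = ∑ i, b i * P.eval (c i) := by
  have hev : ∀ τ : ℝ, P.eval τ = ∑ j ∈ Finset.range q, P.coeff j * τ ^ j := fun τ =>
    Polynomial.eval_eq_sum_range' hP τ
  calc ∫ τ in (0:ℝ)..1, P.eval τ
      = ∫ τ in (0:ℝ)..1, ∑ j ∈ Finset.range q, P.coeff j * τ ^ j := by simp_rw [hev]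
    _ = ∑ j ∈ Finset.range q, ∫ τ in (0:ℝ)..1, P.coeff j * τ ^ j := by
        apply intervalIntegral.integral_finset_sum
        intro j _
        exact ((continuous_const.mul (continuous_pow j)).intervalIntegrable _ _)
    _ = ∑ j ∈ Finset.range q, P.coeff j * (1 / ((j:ℝ)+1)) := by
        refine Finset.sum_congr rfl fun j _ => ?_
        rw [intervalIntegral.integral_const_mul, integral_pow]
        norm_num
    _ = ∑ i, b i * P.eval (c i) := by
        simp_rw [hev, Finset.mul_sum]
        rw [Finset.sum_comm]
        refine Finset.sum_congr rfl fun j hj => ?_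
        rw [← hquad j (Finset.mem_range.mp hj), Finset.mul_sum]
        exact Finset.sum_congr rfl fun i _ => by ring

lemma affine_comp_poly {m : ℕ} (y v : Fin m → ℝ) (p : MvPolynomial (Fin m) ℝ) :
    ∃ P : Polynomial ℝ, P.natDegree ≤ p.totalDegree ∧
      ∀ τ : ℝ, P.eval τ = MvPolynomial.eval (fun l => y l + τ * v l) p := by
  refine ⟨MvPolynomial.aeval (fun l => Polynomial.C (y l) + Polynomial.X * Polynomial.C (v l)) p,
    ?_, ?_⟩
  · rw [MvPolynomial.aeval_def, MvPolynomial.eval₂_eq]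
    apply Polynomial.natDegree_sum_le_of_forall_le
    intro d hd
    refine (Polynomial.natDegree_mul_le).trans ?_
    have h1 : (algebraMap ℝ (Polynomial ℝ) (MvPolynomial.coeff d p)).natDegree = 0 := by
      simp [Polynomial.natDegree_C]
    rw [h1, zero_add]
    refine (Polynomial.natDegree_prod_le _ _).trans ?_
    calc ∑ l ∈ d.support, ((Polynomial.C (y l) + Polynomial.X * Polynomial.C (v l)) ^ d l).natDegree
        ≤ ∑ l ∈ d.support, d l := by
          refine Finset.sum_le_sum fun l _ => ?_
          have h2 : (Polynomial.C (y l) + Polynomial.X * Polynomial.C (v l)).natDegree ≤ 1 := by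
            refine (Polynomial.natDegree_add_le _ _).trans ?_
            refine max_le (by simp) (Polynomial.natDegree_mul_le.trans (by simp))
          exact (Polynomial.natDegree_pow_le_of_le (d l) h2).trans (by simp)
      _ ≤ p.totalDegree := by simpa [Finsupp.sum] using MvPolynomial.le_totalDegree hd
  · intro τ
    induction p using MvPolynomial.induction_on with
    | C a => simp
    | add p q hp hq =>
        rw [_root_.map_add, Polynomial.eval_add, hp, hq, _root_.map_add]
    | mul_X p n hp =>
        rw [_root_.map_mul, _root_.map_mul, Polynomial.eval_mul, hp,
          MvPolynomial.aeval_X, MvPolynomial.eval_X]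
        simp only [Polynomial.eval_add, Polynomial.eval_mul, Polynomial.eval_C, Polynomial.eval_X]


/-- Remark 4.1: if every entry of the Jacobian `∇L` is a polynomial
function of degree `≤ q−1` and the quadrature rule has order `q`, then the
quadrature MAVF scheme exactly preserves the invariant `L`. -/
theorem quadrature_mavf_preserves_polynomial_invariants
    (m ν D M q : ℕ) (hM : 1 ≤ M) (hq : 1 ≤ q)
    (L : (Fin m → ℝ) → (Fin ν → ℝ)) (hL : ContDiff ℝ 1 L)
    (f : (Fin m → ℝ) → (Fin m → ℝ)) (g : Fin D → (Fin m → ℝ) → (Fin m → ℝ))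
    (hf : Continuous f) (hg : ∀ r, Continuous (g r))
    (c b : Fin M → ℝ) (hc : ∀ i, c i ∈ Set.Icc (0:ℝ) 1)
    -- the quadrature rule has order `q`
    (hquad : ∀ j < q, ∑ i, b i * c i ^ j = 1 / ((j : ℝ) + 1))
    (y Yt : Fin m → ℝ) (h : ℝ) (w : Fin D → ℝ)
    (α₀ : Fin ν → ℝ) (α : Fin D → Fin ν → ℝ)
    (σ : ℝ → (Fin m → ℝ)) (hσ : ∀ τ, σ τ = y + τ • (Yt - y))
    -- `J x` is the ν×m Jacobian matrix of `L` at `x`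
    (J : (Fin m → ℝ) → Matrix (Fin ν) (Fin m) ℝ)
    (hJ : ∀ x i l, J x i l = fderiv ℝ L x (Pi.single l 1) i)
    -- every entry of the Jacobian is a polynomial function of degree ≤ q−1
    (hpoly : ∀ i l, ∃ p : MvPolynomial (Fin m) ℝ,
      p.totalDegree ≤ q - 1 ∧ ∀ x, J x i l = MvPolynomial.eval x p)
    -- quadrature approximations of the integrals in the scheme
    (B : Matrix (Fin ν) (Fin m) ℝ) (hB : B = ∑ i, b i • J (σ (c i)))
    (F : Fin m → ℝ) (hF : F = ∑ i, b i • f (σ (c i)))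
    (G : Fin D → Fin m → ℝ) (hG : ∀ r, G r = ∑ i, b i • g r (σ (c i)))
    -- the quadrature MAVF scheme equations (i), (ii), (iii)
    (heq1 : Yt = y + h • (F - Bᵀ.mulVec α₀) + ∑ r, w r • (G r - Bᵀ.mulVec (α r)))
    (heq2 : (B * Bᵀ).mulVec α₀ = B.mulVec F)
    (heq3 : ∀ r, (B * Bᵀ).mulVec (α r) = B.mulVec (G r)) :
    L Yt = L y := by
  -- derivative of the affine path
  have hv : ∀ τ : ℝ, HasDerivAt σ (Yt - y) τ := by
    intro τ
    have hσ' : σ = fun τ => y + τ • (Yt - y) := funext hσ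
    rw [hσ']
    simpa using ((hasDerivAt_id τ).smul_const (Yt - y)).const_add y
  -- the composed single-variable polynomials
  have hPol : ∀ i l, ∃ P : Polynomial ℝ, P.natDegree < q ∧ ∀ τ, J (σ τ) i l = P.eval τ := by
    intro i l
    obtain ⟨p, hdeg, hev⟩ := hpoly i l
    obtain ⟨P, hPdeg, hPev⟩ := affine_comp_poly y (Yt - y) p
    refine ⟨P, lt_of_le_of_lt (hPdeg.trans hdeg) (by omega), fun τ => ?_⟩
    have hst : σ τ = fun l' => y l' + τ * (Yt - y) l' := by
      funext l'; simp [hσ, smul_eq_mul]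
    rw [hev, hst, hPev τ]
  choose P hPdeg hPev using hPol
  -- quadrature exactness gives the integral of the Jacobian entries
  have hint : ∀ i l, ∫ τ in (0:ℝ)..1, (P i l).eval τ = B i l := by
    intro i l
    rw [quad_exact_aux c b hquad (P i l) (hPdeg i l), hB]
    simp only [Matrix.sum_apply, Matrix.smul_apply, smul_eq_mul]
    exact Finset.sum_congr rfl fun k _ => by rw [hPev]
  -- per-component fundamental theorem of calculus
  have key : ∀ i, L Yt i - L y i = (B.mulVec (Yt - y)) i := by
    intro i
    have hder : ∀ τ ∈ Set.uIcc (0:ℝ) 1,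
        HasDerivAt (fun τ => L (σ τ) i) (∑ l, (Yt - y) l * (P i l).eval τ) τ := by
      intro τ _
      have hLd : DifferentiableAt ℝ L (σ τ) := (hL.differentiable one_ne_zero) (σ τ)
      have h1 : HasDerivAt (fun τ => L (σ τ)) (fderiv ℝ L (σ τ) (Yt - y)) τ :=
        (hLd.hasFDerivAt).comp_hasDerivAt τ (hv τ)
      have h2 := hasDerivAt_pi.mp h1 i
      have hexp : fderiv ℝ L (σ τ) (Yt - y) i = ∑ l, (Yt - y) l * (P i l).eval τ := by
        have hsum : (Yt - y) = ∑ l, (Yt - y) l • (Pi.single l 1 : Fin m → ℝ) := by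
          funext l'
          rw [Finset.sum_apply]
          simp [Pi.single_apply, Finset.sum_ite_eq']
        conv_lhs => rw [hsum, map_sum]
        rw [Finset.sum_apply]
        refine Finset.sum_congr rfl fun l _ => ?_
        rw [← hPev i l, hJ]
        simp [smul_eq_mul]
      rwa [hexp] at h2
    have hcont : Continuous fun τ : ℝ => ∑ l, (Yt - y) l * (P i l).eval τ :=
      continuous_finset_sum _ fun l _ => continuous_const.mul (P i l).continuous
    have hFTC := intervalIntegral.integral_eq_sub_of_hasDerivAt hder
      (hcont.intervalIntegrable 0 1)
    have hσ1 : σ 1 = Yt := by funext l'; simp [hσ]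
    have hσ0 : σ 0 = y := by funext l'; simp [hσ]
    rw [hσ1, hσ0] at hFTC
    rw [← hFTC]
    rw [intervalIntegral.integral_finset_sum (f := fun l τ => (Yt - y) l * (P i l).eval τ) (fun l _ =>
      ((continuous_const.mul (P i l).continuous).intervalIntegrable 0 1 :
        IntervalIntegrable (fun τ => (Yt - y) l * (P i l).eval τ) volume 0 1))]
    simp_rw [intervalIntegral.integral_const_mul, hint i]
    simp [Matrix.mulVec, dotProduct, mul_comm]
  -- the scheme equations kill the quadrature Jacobian term
  have hzero : B.mulVec (Yt - y) = 0 := by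
    have hYt : Yt - y = h • (F - Bᵀ.mulVec α₀) + ∑ r, w r • (G r - Bᵀ.mulVec (α r)) := by
      rw [heq1]; abel
    calc B.mulVec (Yt - y)
        = B.mulVecLin (h • (F - Bᵀ.mulVec α₀) + ∑ r, w r • (G r - Bᵀ.mulVec (α r))) := by
          rw [Matrix.mulVecLin_apply, hYt]
      _ = 0 := by
          simp only [_root_.map_add, _root_.map_smul, _root_.map_sum, _root_.map_sub,
            Matrix.mulVecLin_apply, Matrix.mulVec_mulVec, heq2, heq3, sub_self, smul_zero,
            Finset.sum_const_zero, add_zero]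
  funext i
  have hk := key i
  rw [hzero] at hk
  have : L Yt i - L y i = 0 := by simpa using hk
  linarith
end

section
/- Let f, g : ℝ^m → ℝ^m be continuously differentiable, let L : ℝ^m → ℝ^ν be twice continuously differentiable, and let y ∈ ℝ^m be such that the ν×ν matrix ∇L(y) ∇L(y)ᵀ is invertible and ∇L(y) f(y) = 0, ∇L(y) g(y) = 0. Then there exist δ > 0, ε > 0 and continuous maps (h, w) ↦ (Ȳ(h,w), α₀(h,w), α₁(h,w)) ∈ ℝ^m × ℝ^ν × ℝ^ν, defined for all (h,w) ∈ ℝ² with |h| < δ and |w| < δ, such that: (a) Ȳ(0,0) = y, α₀(0,0) = 0, α₁(0,0) = 0; (b) for every such (h,w), the triple (Ȳ, α₀, α₁) = (Ȳ(h,w), α₀(h,w), α₁(h,w)) satisfies, with σ(τ) = y + τ(Ȳ − y), the MAVF equations Ȳ = y + h[∫₀¹ f(σ(τ)) dτ − (∫₀¹ ∇L(σ(τ))ᵀ dτ) α₀] + w[∫₀¹ g(σ(τ)) dτ − (∫₀¹ ∇L(σ(τ))ᵀ dτ) α₁], (∫₀¹∇L(σ) dτ)(∫₀¹∇L(σ)ᵀ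 dτ) α₀ = (∫₀¹∇L(σ) dτ)(∫₀¹ f(σ) dτ), and (∫₀¹∇L(σ) dτ)(∫₀¹∇L(σ)ᵀ dτ) α₁ = (∫₀¹∇L(σ) dτ)(∫₀¹ g(σ) dτ); and (c) this is the unique solution with |Ȳ − y| + |α₀| + |α₁| < ε. -/
open Matrix MeasureTheory

set_option maxHeartbeats 1000000 in
set_option synthInstance.maxHeartbeats 400000 in
/-- C¹-smoothness of a parametric interval integral with C¹ integrand. -/
lemma MAVF.paramC1 {E G : Type*} [NormedAddCommGroup E] [NormedSpace ℝ E]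
    [FiniteDimensional ℝ E] [NormedAddCommGroup G] [NormedSpace ℝ G] [CompleteSpace G]
    {F : E → ℝ → G} (hF : ContDiff ℝ 1 (Function.uncurry F)) :
    ContDiff ℝ 1 fun x => ∫ t in (0:ℝ)..1, F x t := by
  set D : E → ℝ → (E →L[ℝ] G) := fun x t =>
    (fderiv ℝ (Function.uncurry F) (x, t)).comp
      ((ContinuousLinearMap.id ℝ E).prod (0 : E →L[ℝ] ℝ)) with hD
  have hDc : Continuous fun q : E × ℝ => D q.1 q.2 := by
    apply Continuous.clm_comp _ continuous_const
    exact (hF.continuous_fderiv one_ne_zero)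
  have hdiffF : ∀ q : E × ℝ, HasFDerivAt (fun x => F x q.2) (D q.1 q.2) q.1 := by
    intro q
    have h1 : HasFDerivAt (Function.uncurry F)
        (fderiv ℝ (Function.uncurry F) (q.1, q.2)) (q.1, q.2) :=
      (hF.differentiable one_ne_zero _).hasFDerivAt
    have h2 : HasFDerivAt (fun x : E => (x, q.2))
        ((ContinuousLinearMap.id ℝ E).prod (0 : E →L[ℝ] ℝ)) q.1 :=
      (hasFDerivAt_id q.1).prodMk (hasFDerivAt_const q.2 q.1)
    exact h1.comp q.1 h2
  have key : ∀ x₀ : E, HasFDerivAt (fun x => ∫ t in (0:ℝ)..1, F x t)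
      (∫ t in (0:ℝ)..1, D x₀ t) x₀ := by
    intro x₀
    obtain ⟨M, hM⟩ : ∃ M, ∀ q ∈ (Metric.closedBall x₀ 1) ×ˢ (Set.uIcc (0:ℝ) 1),
        ‖D q.1 q.2‖ ≤ M :=
      ((isCompact_closedBall x₀ 1).prod isCompact_uIcc).exists_bound_of_continuousOn
        hDc.continuousOn
    apply intervalIntegral.hasFDerivAt_integral_of_dominated_of_fderiv_le
      (bound := fun _ => M) (s := Metric.ball x₀ 1) (Metric.ball_mem_nhds x₀ one_pos)
    · filter_upwards with x
      exact ((hF.continuous.comp (Continuous.prodMk_right x)).aestronglyMeasurable)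
    · exact ((hF.continuous.comp (Continuous.prodMk_right x₀))).intervalIntegrable 0 1
    · exact ((hDc.comp (Continuous.prodMk_right x₀))).aestronglyMeasurable
    · filter_upwards with t ht x hx
      exact hM (x, t) ⟨Metric.ball_subset_closedBall hx, Set.uIoc_subset_uIcc ht⟩
    · exact intervalIntegrable_const
    · filter_upwards with t ht x hx
      exact hdiffF (x, t)
  rw [contDiff_one_iff_fderiv]
  refine ⟨fun x => (key x).differentiableAt, ?_⟩
  rw [show (fderiv ℝ fun x => ∫ t in (0:ℝ)..1, F x t)
      = fun x => ∫ t in (0:ℝ)..1, D x t from funext fun x => (key x).fderiv]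
  exact intervalIntegral.continuous_parametric_intervalIntegral_of_continuous' (f := D) hDc 0 1

/-- The single-noise MAVF scheme equations for starting point `y`, stepsize `h`,
noise increment `w`, update `Yb` and modification coefficients `a₀, a₁`, where
`J x` is the ν×m Jacobian matrix of `L` at `x`. -/
def MAVFEquations (m ν : ℕ) (f g : (Fin m → ℝ) → (Fin m → ℝ))
    (J : (Fin m → ℝ) → Matrix (Fin ν) (Fin m) ℝ)
    (y : Fin m → ℝ) (h w : ℝ) (Yb : Fin m → ℝ) (a₀ a₁ : Fin ν → ℝ) : Prop :=
  let σ : ℝ → Fin m → ℝ := fun τ => y + τ • (Yb - y)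
  let A : Matrix (Fin ν) (Fin m) ℝ :=
    Matrix.of fun i l => ∫ τ in (0:ℝ)..1, J (σ τ) i l
  let F : Fin m → ℝ := fun l => ∫ τ in (0:ℝ)..1, f (σ τ) l
  let G : Fin m → ℝ := fun l => ∫ τ in (0:ℝ)..1, g (σ τ) l
  Yb = y + h • (F - Aᵀ.mulVec a₀) + w • (G - Aᵀ.mulVec a₁) ∧
    (A * Aᵀ).mulVec a₀ = A.mulVec F ∧
    (A * Aᵀ).mulVec a₁ = A.mulVec G

set_option maxHeartbeats 4000000 in
set_option synthInstance.maxHeartbeats 400000 in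
/-- deterministic content of Lemma 3.1: by the implicit function
theorem, the single-noise MAVF scheme is uniquely locally solvable, with a
continuous solution map `(h, w) ↦ (Ȳ, α₀, α₁)` equal to `(y, 0, 0)` at `(0,0)`. -/
theorem mavf_local_solvability
    (m ν : ℕ)
    (f g : (Fin m → ℝ) → (Fin m → ℝ)) (hf : ContDiff ℝ 1 f) (hg : ContDiff ℝ 1 g)
    (L : (Fin m → ℝ) → (Fin ν → ℝ)) (hL : ContDiff ℝ 2 L)
    (J : (Fin m → ℝ) → Matrix (Fin ν) (Fin m) ℝ)
    (hJ : ∀ x i l, J x i l = fderiv ℝ L x (Pi.single l 1) i)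
    (y : Fin m → ℝ)
    (hinv : IsUnit (J y * (J y)ᵀ))
    (hfy : (J y).mulVec (f y) = 0) (hgy : (J y).mulVec (g y) = 0) :
    ∃ δ > (0:ℝ), ∃ ε > (0:ℝ),
      ∃ Yb : ℝ × ℝ → Fin m → ℝ, ∃ a₀ a₁ : ℝ × ℝ → Fin ν → ℝ,
        ContinuousOn (fun p => (Yb p, a₀ p, a₁ p))
          {p : ℝ × ℝ | |p.1| < δ ∧ |p.2| < δ} ∧
        Yb (0, 0) = y ∧ a₀ (0, 0) = 0 ∧ a₁ (0, 0) = 0 ∧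
        ∀ h w : ℝ, |h| < δ → |w| < δ →
          MAVFEquations m ν f g J y h w (Yb (h, w)) (a₀ (h, w)) (a₁ (h, w)) ∧
          ‖Yb (h, w) - y‖ + ‖a₀ (h, w)‖ + ‖a₁ (h, w)‖ < ε ∧
          ∀ Y' b₀ b₁, MAVFEquations m ν f g J y h w Y' b₀ b₁ →
            ‖Y' - y‖ + ‖b₀‖ + ‖b₁‖ < ε →
            Y' = Yb (h, w) ∧ b₀ = a₀ (h, w) ∧ b₁ = a₁ (h, w) := by
  classical
  -- building blocks
  set ΦA : (Fin m → ℝ) → Matrix (Fin ν) (Fin m) ℝ :=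
    fun x => Matrix.of fun i l => ∫ τ in (0:ℝ)..1, J (y + τ • (x - y)) i l with hΦAdef
  set Φf : (Fin m → ℝ) → (Fin m → ℝ) :=
    fun x l => ∫ τ in (0:ℝ)..1, f (y + τ • (x - y)) l with hΦfdef
  set Φg : (Fin m → ℝ) → (Fin m → ℝ) :=
    fun x l => ∫ τ in (0:ℝ)..1, g (y + τ • (x - y)) l with hΦgdef
  set R : ((ℝ × ℝ) × ((Fin m → ℝ) × (Fin ν → ℝ) × (Fin ν → ℝ)))
      → ((Fin m → ℝ) × (Fin ν → ℝ) × (Fin ν → ℝ)) :=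
    fun z => (z.2.1 - (y + z.1.1 • (Φf z.2.1 - (ΦA z.2.1)ᵀ.mulVec z.2.2.1)
                         + z.1.2 • (Φg z.2.1 - (ΦA z.2.1)ᵀ.mulVec z.2.2.2)),
              (ΦA z.2.1 * (ΦA z.2.1)ᵀ).mulVec z.2.2.1 - (ΦA z.2.1).mulVec (Φf z.2.1),
              (ΦA z.2.1 * (ΦA z.2.1)ᵀ).mulVec z.2.2.2 - (ΦA z.2.1).mulVec (Φg z.2.1)) with hRdef
  set Ψ : ((ℝ × ℝ) × ((Fin m → ℝ) × (Fin ν → ℝ) × (Fin ν → ℝ)))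
      → ((ℝ × ℝ) × ((Fin m → ℝ) × (Fin ν → ℝ) × (Fin ν → ℝ))) :=
    fun z => (z.1, R z) with hΨdef
  set z₀ : ((ℝ × ℝ) × ((Fin m → ℝ) × (Fin ν → ℝ) × (Fin ν → ℝ))) := ((0,0),(y,0,0)) with hz₀def
  -- the MAVF equations as zeros of R
  have hiff : ∀ (h w : ℝ) (Yb : Fin m → ℝ) (a b : Fin ν → ℝ),
      MAVFEquations m ν f g J y h w Yb a b ↔ R ((h,w),(Yb,a,b)) = 0 := by
    intro h w Yb a b
    rw [MAVFEquations, hRdef]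
    simp only [hΦAdef, hΦfdef, hΦgdef, Prod.ext_iff, Prod.fst_zero, Prod.snd_zero, sub_eq_zero]
  -- values at the base point
  have hΦAy : ΦA y = J y := by
    funext i l
    rw [hΦAdef]
    show (∫ τ in (0:ℝ)..1, J (y + τ • (y - y)) i l) = J y i l
    rw [show (fun τ : ℝ => J (y + τ • (y - y)) i l) = fun _ => J y i l by funext τ; simp]
    simp
  have hΦfy : Φf y = f y := by
    funext l
    show (∫ τ in (0:ℝ)..1, f (y + τ • (y - y)) l) = f y l
    rw [show (fun τ : ℝ => f (y + τ • (y - y)) l) = fun _ => f y l by funext τ; simp]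
    simp
  have hΦgy : Φg y = g y := by
    funext l
    show (∫ τ in (0:ℝ)..1, g (y + τ • (y - y)) l) = g y l
    rw [show (fun τ : ℝ => g (y + τ • (y - y)) l) = fun _ => g y l by funext τ; simp]
    simp
  have hR0 : R z₀ = 0 := by
    rw [hRdef, hz₀def]
    simp only [Prod.ext_iff, Prod.fst_zero, Prod.snd_zero]
    refine ⟨by simp, by simp [hΦAy, hΦfy, hfy], by simp [hΦAy, hΦgy, hgy]⟩
  have hΨ0 : Ψ z₀ = 0 := by
    rw [hΨdef]; simp only [hR0]; rfl
  -- smoothness of scalar building blocks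
  have hint : ∀ (c : (Fin m → ℝ) → ℝ), ContDiff ℝ 1 c →
      ContDiff ℝ 1 (fun x : Fin m → ℝ => ∫ τ in (0:ℝ)..1, c (y + τ • (x - y))) := by
    intro c hc
    apply MAVF.paramC1 (F := fun x t => c (y + t • (x - y)))
    have haff : ContDiff ℝ 1 (fun q : (Fin m → ℝ) × ℝ => y + q.2 • (q.1 - y)) :=
      contDiff_const.add (contDiff_snd.smul (contDiff_fst.sub contDiff_const))
    exact hc.comp haff
  have hJc : ∀ i l, ContDiff ℝ 1 (fun x => J x i l) := by
    intro i l
    have hLd : ContDiff ℝ 1 (fderiv ℝ L) := hL.fderiv_right (by norm_num)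
    have h1 : ContDiff ℝ 1 fun x => fderiv ℝ L x (Pi.single l 1) :=
      hLd.clm_apply contDiff_const
    have h2 := contDiff_pi.1 h1 i
    have he : (fun x => J x i l) = fun x => fderiv ℝ L x (Pi.single l 1) i :=
      funext fun x => hJ x i l
    rw [he]; exact h2
  have hΦfc : ContDiff ℝ 1 Φf := by
    rw [hΦfdef]
    exact contDiff_pi.2 fun l => hint _ (contDiff_pi.1 hf l)
  have hΦgc : ContDiff ℝ 1 Φg := by
    rw [hΦgdef]
    exact contDiff_pi.2 fun l => hint _ (contDiff_pi.1 hg l)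
  have hΦAc : ∀ i l, ContDiff ℝ 1 (fun x => ΦA x i l) := by
    intro i l
    rw [hΦAdef]
    exact hint _ (hJc i l)
  -- smoothness of R
  have hYc : ContDiff ℝ 1 (fun z : ((ℝ × ℝ) × ((Fin m → ℝ) × (Fin ν → ℝ) × (Fin ν → ℝ))) =>
      z.2.1) := contDiff_fst.comp contDiff_snd
  have hac : ContDiff ℝ 1 (fun z : ((ℝ × ℝ) × ((Fin m → ℝ) × (Fin ν → ℝ) × (Fin ν → ℝ))) =>
      z.2.2.1) := contDiff_fst.comp (contDiff_snd.comp contDiff_snd)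
  have hbc : ContDiff ℝ 1 (fun z : ((ℝ × ℝ) × ((Fin m → ℝ) × (Fin ν → ℝ) × (Fin ν → ℝ))) =>
      z.2.2.2) := contDiff_snd.comp (contDiff_snd.comp contDiff_snd)
  have hAz : ∀ i l, ContDiff ℝ 1
      (fun z : ((ℝ × ℝ) × ((Fin m → ℝ) × (Fin ν → ℝ) × (Fin ν → ℝ))) => ΦA z.2.1 i l) :=
    fun i l => (hΦAc i l).comp hYc
  have hfz : ContDiff ℝ 1
      (fun z : ((ℝ × ℝ) × ((Fin m → ℝ) × (Fin ν → ℝ) × (Fin ν → ℝ))) => Φf z.2.1) :=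
    hΦfc.comp hYc
  have hgz : ContDiff ℝ 1
      (fun z : ((ℝ × ℝ) × ((Fin m → ℝ) × (Fin ν → ℝ) × (Fin ν → ℝ))) => Φg z.2.1) :=
    hΦgc.comp hYc
  have hmv1 : ∀ (v : ((ℝ × ℝ) × ((Fin m → ℝ) × (Fin ν → ℝ) × (Fin ν → ℝ))) → (Fin ν → ℝ)),
      ContDiff ℝ 1 v →
      ContDiff ℝ 1 (fun z : ((ℝ × ℝ) × ((Fin m → ℝ) × (Fin ν → ℝ) × (Fin ν → ℝ))) =>
        (ΦA z.2.1)ᵀ.mulVec (v z)) := by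
    intro v hv
    have : (fun z : ((ℝ × ℝ) × ((Fin m → ℝ) × (Fin ν → ℝ) × (Fin ν → ℝ))) =>
        (ΦA z.2.1)ᵀ.mulVec (v z)) = fun z l => ∑ i, ΦA z.2.1 i l * v z i := by
      funext z l
      simp [Matrix.mulVec, dotProduct]
    rw [this]
    exact contDiff_pi.2 fun l => ContDiff.sum fun i _ =>
      (hAz i l).mul (contDiff_pi.1 hv i)
  have hmv2 : ∀ (v : ((ℝ × ℝ) × ((Fin m → ℝ) × (Fin ν → ℝ) × (Fin ν → ℝ))) → (Fin ν → ℝ)),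
      ContDiff ℝ 1 v →
      ContDiff ℝ 1 (fun z : ((ℝ × ℝ) × ((Fin m → ℝ) × (Fin ν → ℝ) × (Fin ν → ℝ))) =>
        (ΦA z.2.1 * (ΦA z.2.1)ᵀ).mulVec (v z)) := by
    intro v hv
    have : (fun z : ((ℝ × ℝ) × ((Fin m → ℝ) × (Fin ν → ℝ) × (Fin ν → ℝ))) =>
        (ΦA z.2.1 * (ΦA z.2.1)ᵀ).mulVec (v z))
        = fun z i => ∑ j, (∑ l, ΦA z.2.1 i l * ΦA z.2.1 j l) * v z j := by
      funext z i
      simp [Matrix.mulVec, dotProduct, Matrix.mul_apply]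
    rw [this]
    exact contDiff_pi.2 fun i => ContDiff.sum fun j _ =>
      ((ContDiff.sum fun l _ => (hAz i l).mul (hAz j l)).mul (contDiff_pi.1 hv j))
  have hmv3 : ∀ (v : ((ℝ × ℝ) × ((Fin m → ℝ) × (Fin ν → ℝ) × (Fin ν → ℝ))) → (Fin m → ℝ)),
      ContDiff ℝ 1 v →
      ContDiff ℝ 1 (fun z : ((ℝ × ℝ) × ((Fin m → ℝ) × (Fin ν → ℝ) × (Fin ν → ℝ))) =>
        (ΦA z.2.1).mulVec (v z)) := by
    intro v hv
    have : (fun z : ((ℝ × ℝ) × ((Fin m → ℝ) × (Fin ν → ℝ) × (Fin ν → ℝ))) =>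
        (ΦA z.2.1).mulVec (v z)) = fun z i => ∑ l, ΦA z.2.1 i l * v z l := by
      funext z i
      simp [Matrix.mulVec, dotProduct]
    rw [this]
    exact contDiff_pi.2 fun i => ContDiff.sum fun l _ =>
      (hAz i l).mul (contDiff_pi.1 hv l)
  have hR1 : ContDiff ℝ 1 R := by
    rw [hRdef]
    refine ContDiff.prodMk ?_ (ContDiff.prodMk ?_ ?_)
    · have hhc : ContDiff ℝ 1 (fun z : ((ℝ × ℝ) × ((Fin m → ℝ) × (Fin ν → ℝ) × (Fin ν → ℝ))) =>
          z.1.1) := contDiff_fst.fst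
      have hwc : ContDiff ℝ 1 (fun z : ((ℝ × ℝ) × ((Fin m → ℝ) × (Fin ν → ℝ) × (Fin ν → ℝ))) =>
          z.1.2) := contDiff_fst.snd
      exact hYc.sub ((contDiff_const.add (hhc.smul (hfz.sub (hmv1 _ hac)))).add
          (hwc.smul (hgz.sub (hmv1 _ hbc))))
    · exact (hmv2 _ hac).sub (hmv3 _ hfz)
    · exact (hmv2 _ hbc).sub (hmv3 _ hgz)
  have hΨ1 : ContDiff ℝ 1 Ψ := contDiff_fst.prodMk hR1
  -- the derivative at z₀
  set D := fderiv ℝ Ψ z₀ with hDdef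
  have hDf : HasFDerivAt Ψ D z₀ := (hΨ1.differentiable one_ne_zero z₀).hasFDerivAt
  have hdir : ∀ u u' , HasDerivAt (fun s : ℝ => Ψ (z₀ + s • u)) u' 0 → D u = u' := by
    intro u u' hu
    refine HasDerivAt.unique ?_ hu
    have hline : HasDerivAt (fun s : ℝ => z₀ + s • u) u 0 := by
      simpa using (((hasDerivAt_id (0:ℝ)).smul_const u).const_add z₀)
    have hDf' : HasFDerivAt Ψ D (z₀ + (0:ℝ) • u) := by simpa using hDf
    have := hDf'.comp_hasDerivAt (x := (0:ℝ)) hline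
    simpa [Function.comp_def] using this
  -- derivative in the (h,w) directions
  have hdirP : ∀ hh ww : ℝ, D ((hh, ww), (0, 0, 0))
      = ((hh, ww), (-(hh • f y) - ww • g y, 0, 0)) := by
    intro hh ww
    apply hdir
    have hcurve : (fun s : ℝ => Ψ (z₀ + s • (((hh, ww), (0, 0, 0)) :
        (ℝ × ℝ) × ((Fin m → ℝ) × (Fin ν → ℝ) × (Fin ν → ℝ)))))
        = fun s : ℝ => s • ((((hh, ww), (-(hh • f y) - ww • g y, 0, 0))) :
        (ℝ × ℝ) × ((Fin m → ℝ) × (Fin ν → ℝ) × (Fin ν → ℝ))) := by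
      funext s
      rw [hΨdef, hRdef, hz₀def]
      refine Prod.ext (by simp [Prod.ext_iff]) (Prod.ext ?_ (Prod.ext ?_ ?_))
      · show (fun l => _) - _ = _
        funext l
        simp [hΦAy, hΦfy, hΦgy, Matrix.mulVec_zero, smul_smul]
        ring
      · show (_ : Fin ν → ℝ) = _
        simp [hΦAy, hΦfy, hfy, Matrix.mulVec_zero]
      · show (_ : Fin ν → ℝ) = _
        simp [hΦAy, hΦgy, hgy, Matrix.mulVec_zero]
    rw [hcurve]
    simpa using (hasDerivAt_id (0:ℝ)).smul_const
      ((((hh, ww), (-(hh • f y) - ww • g y, 0, 0))) :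
        (ℝ × ℝ) × ((Fin m → ℝ) × (Fin ν → ℝ) × (Fin ν → ℝ)))
  -- derivative in the a directions
  have hdirA : ∀ c : Fin ν → ℝ, D ((0, 0), (0, c, 0))
      = ((0, 0), (0, (J y * (J y)ᵀ).mulVec c, 0)) := by
    intro c
    apply hdir
    have hcurve : (fun s : ℝ => Ψ (z₀ + s • ((((0:ℝ), (0:ℝ)), ((0:Fin m → ℝ), c, (0:Fin ν → ℝ)))
        : (ℝ × ℝ) × ((Fin m → ℝ) × (Fin ν → ℝ) × (Fin ν → ℝ)))))
        = fun s : ℝ => s • (((((0:ℝ), (0:ℝ)), ((0:Fin m → ℝ), (J y * (J y)ᵀ).mulVec c,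
            (0:Fin ν → ℝ)))) : (ℝ × ℝ) × ((Fin m → ℝ) × (Fin ν → ℝ) × (Fin ν → ℝ))) := by
      funext s
      rw [hΨdef, hRdef, hz₀def]
      refine Prod.ext (by simp [Prod.ext_iff]) (Prod.ext ?_ (Prod.ext ?_ ?_))
      · show (fun l => _) - _ = _
        simp [hΦAy, hΦfy, hΦgy, Matrix.mulVec_zero]
      · show (_ : Fin ν → ℝ) = _
        simp [hΦAy, hΦfy, hfy, Matrix.mulVec_smul]
      · show (_ : Fin ν → ℝ) = _
        simp [hΦAy, hΦgy, hgy, Matrix.mulVec_zero]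
    rw [hcurve]
    simpa using (hasDerivAt_id (0:ℝ)).smul_const
      (((((0:ℝ), (0:ℝ)), ((0:Fin m → ℝ), (J y * (J y)ᵀ).mulVec c, (0:Fin ν → ℝ)))) :
        (ℝ × ℝ) × ((Fin m → ℝ) × (Fin ν → ℝ) × (Fin ν → ℝ)))
  have hdirB : ∀ c : Fin ν → ℝ, D ((0, 0), (0, 0, c))
      = ((0, 0), (0, 0, (J y * (J y)ᵀ).mulVec c)) := by
    intro c
    apply hdir
    have hcurve : (fun s : ℝ => Ψ (z₀ + s • ((((0:ℝ), (0:ℝ)), ((0:Fin m → ℝ), (0:Fin ν → ℝ), c))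
        : (ℝ × ℝ) × ((Fin m → ℝ) × (Fin ν → ℝ) × (Fin ν → ℝ)))))
        = fun s : ℝ => s • (((((0:ℝ), (0:ℝ)), ((0:Fin m → ℝ), (0:Fin ν → ℝ),
            (J y * (J y)ᵀ).mulVec c))) : (ℝ × ℝ) × ((Fin m → ℝ) × (Fin ν → ℝ) × (Fin ν → ℝ))) := by
      funext s
      rw [hΨdef, hRdef, hz₀def]
      refine Prod.ext (by simp [Prod.ext_iff]) (Prod.ext ?_ (Prod.ext ?_ ?_))
      · show (fun l => _) - _ = _
        simp [hΦAy, hΦfy, hΦgy, Matrix.mulVec_zero]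
      · show (_ : Fin ν → ℝ) = _
        simp [hΦAy, hΦfy, hfy, Matrix.mulVec_zero]
      · show (_ : Fin ν → ℝ) = _
        simp [hΦAy, hΦgy, hgy, Matrix.mulVec_smul]
    rw [hcurve]
    simpa using (hasDerivAt_id (0:ℝ)).smul_const
      (((((0:ℝ), (0:ℝ)), ((0:Fin m → ℝ), (0:Fin ν → ℝ), (J y * (J y)ᵀ).mulVec c))) :
        (ℝ × ℝ) × ((Fin m → ℝ) × (Fin ν → ℝ) × (Fin ν → ℝ)))
  -- derivative in the Y direction
  have hK1 : ContDiff ℝ 1 (fun x => (ΦA x).mulVec (Φf x)) := by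
    have : (fun x => (ΦA x).mulVec (Φf x)) = fun x i => ∑ l, ΦA x i l * Φf x l := by
      funext x i; simp [Matrix.mulVec, dotProduct]
    rw [this]
    exact contDiff_pi.2 fun i => ContDiff.sum fun l _ =>
      (hΦAc i l).mul (contDiff_pi.1 hΦfc l)
  have hK2 : ContDiff ℝ 1 (fun x => (ΦA x).mulVec (Φg x)) := by
    have : (fun x => (ΦA x).mulVec (Φg x)) = fun x i => ∑ l, ΦA x i l * Φg x l := by
      funext x i; simp [Matrix.mulVec, dotProduct]
    rw [this]
    exact contDiff_pi.2 fun i => ContDiff.sum fun l _ =>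
      (hΦAc i l).mul (contDiff_pi.1 hΦgc l)
  have hcompK : ∀ (K : (Fin m → ℝ) → (Fin ν → ℝ)), ContDiff ℝ 1 K → ∀ u : Fin m → ℝ,
      HasDerivAt (fun s : ℝ => K (y + s • u)) (fderiv ℝ K y u) 0 := by
    intro K hK u
    have hline : HasDerivAt (fun s : ℝ => y + s • u) u 0 := by
      simpa using (((hasDerivAt_id (0:ℝ)).smul_const u).const_add y)
    have hKd : HasFDerivAt K (fderiv ℝ K y) (y + (0:ℝ) • u) := by
      simpa using (hK.differentiable one_ne_zero y).hasFDerivAt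
    simpa [Function.comp_def] using hKd.comp_hasDerivAt (x := (0:ℝ)) hline
  have hdirY : ∀ u : Fin m → ℝ, D ((0, 0), (u, 0, 0))
      = ((0, 0), (u, -(fderiv ℝ (fun x => (ΦA x).mulVec (Φf x)) y u),
          -(fderiv ℝ (fun x => (ΦA x).mulVec (Φg x)) y u))) := by
    intro u
    apply hdir
    have hcurve : (fun s : ℝ => Ψ (z₀ + s • ((((0:ℝ), (0:ℝ)), (u, (0:Fin ν → ℝ), (0:Fin ν → ℝ)))
        : (ℝ × ℝ) × ((Fin m → ℝ) × (Fin ν → ℝ) × (Fin ν → ℝ)))))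
        = fun s : ℝ => ((((0:ℝ), (0:ℝ)) : ℝ × ℝ),
            (s • u, -((fun x => (ΦA x).mulVec (Φf x)) (y + s • u)),
              -((fun x => (ΦA x).mulVec (Φg x)) (y + s • u)))) := by
      funext s
      rw [hΨdef, hRdef, hz₀def]
      refine Prod.ext (by simp [Prod.ext_iff]) (Prod.ext ?_ (Prod.ext ?_ ?_))
      · show (fun l => _) - _ = _
        funext l
        simp [mul_comm]
      · show (_ : Fin ν → ℝ) = _
        simp [Matrix.mulVec_zero]
      · show (_ : Fin ν → ℝ) = _
        simp [Matrix.mulVec_zero]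
    rw [hcurve]
    have h1 : HasDerivAt (fun s : ℝ => s • u) u 0 := by
      simpa using (hasDerivAt_id (0:ℝ)).smul_const u
    have h2 := (hcompK _ hK1 u).neg
    have h3 := (hcompK _ hK2 u).neg
    have h0 : HasDerivAt (fun _ : ℝ => (((0:ℝ), (0:ℝ)) : ℝ × ℝ)) (0 : ℝ × ℝ) 0 :=
      hasDerivAt_const 0 _
    exact h0.prodMk (h1.prodMk (h2.prodMk h3))
  -- injectivity of D
  have hmvinj : ∀ c : Fin ν → ℝ, (J y * (J y)ᵀ).mulVec c = 0 → c = 0 := by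
    intro c hc
    obtain ⟨u, hu⟩ := hinv
    have h1 : ((↑u⁻¹ : Matrix (Fin ν) (Fin ν) ℝ) * (J y * (J y)ᵀ)) = 1 := by
      rw [← hu]; exact u.inv_mul
    calc c = ((↑u⁻¹ : Matrix (Fin ν) (Fin ν) ℝ) * (J y * (J y)ᵀ)).mulVec c := by
            rw [h1, Matrix.one_mulVec]
      _ = (↑u⁻¹ : Matrix (Fin ν) (Fin ν) ℝ).mulVec ((J y * (J y)ᵀ).mulVec c) := by
            rw [Matrix.mulVec_mulVec]
      _ = 0 := by rw [hc, Matrix.mulVec_zero]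
  have hker : ∀ v, D v = 0 → v = 0 := by
    intro v hv
    have hsplit : v = ((v.1.1, v.1.2), ((0:Fin m → ℝ), (0:Fin ν → ℝ), (0:Fin ν → ℝ)))
        + ((0, 0), (v.2.1, 0, 0)) + ((0, 0), (0, v.2.2.1, 0)) + ((0, 0), (0, 0, v.2.2.2)) := by
      refine Prod.ext (by simp [Prod.mk_zero_zero]) (Prod.ext (by simp) (Prod.ext (by simp) (by simp)))
    have hDv : D v = ((v.1.1, v.1.2), (-(v.1.1 • f y) - v.1.2 • g y, 0, 0))
        + ((0, 0), (v.2.1, -(fderiv ℝ (fun x => (ΦA x).mulVec (Φf x)) y v.2.1),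
            -(fderiv ℝ (fun x => (ΦA x).mulVec (Φg x)) y v.2.1)))
        + ((0, 0), (0, (J y * (J y)ᵀ).mulVec v.2.2.1, 0))
        + ((0, 0), (0, 0, (J y * (J y)ᵀ).mulVec v.2.2.2)) := by
      conv_lhs => rw [hsplit]
      rw [map_add, map_add, map_add, hdirP, hdirY, hdirA, hdirB]
    rw [hDv] at hv
    have hv1 : v.1.1 = 0 ∧ v.1.2 = 0 := by
      have := congrArg (fun q => q.1) hv
      simpa [Prod.ext_iff] using this
    have hvY : v.2.1 = 0 := by
      have := congrArg (fun q => q.2.1) hv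
      have h2 : -(v.1.1 • f y) - v.1.2 • g y + v.2.1 + 0 + 0 = 0 := by simpa using this
      rw [hv1.1, hv1.2] at h2
      simpa using h2
    have hva : v.2.2.1 = 0 := by
      have := congrArg (fun q => q.2.2.1) hv
      have h2 : (0:Fin ν → ℝ) + -(fderiv ℝ (fun x => (ΦA x).mulVec (Φf x)) y v.2.1)
          + (J y * (J y)ᵀ).mulVec v.2.2.1 + 0 = 0 := by simpa using this
      rw [hvY] at h2
      simp only [map_zero, neg_zero, zero_add, add_zero] at h2
      exact hmvinj _ h2
    have hvb : v.2.2.2 = 0 := by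
      have := congrArg (fun q => q.2.2.2) hv
      have h2 : (0:Fin ν → ℝ) + -(fderiv ℝ (fun x => (ΦA x).mulVec (Φg x)) y v.2.1)
          + 0 + (J y * (J y)ᵀ).mulVec v.2.2.2 = 0 := by simpa using this
      rw [hvY] at h2
      simp only [map_zero, neg_zero, zero_add, add_zero] at h2
      exact hmvinj _ h2
    refine Prod.ext (Prod.ext hv1.1 hv1.2) (Prod.ext hvY (Prod.ext hva hvb))
  have hDinj : Function.Injective D := by
    intro v₁ v₂ hv
    have h0 : D (v₁ - v₂) = 0 := by rw [map_sub, hv, sub_self]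
    have := hker _ h0
    exact sub_eq_zero.mp this
  -- upgrade to a continuous linear equivalence and apply the inverse function theorem
  have hbij : Function.Bijective D :=
    ⟨hDinj, (LinearMap.injective_iff_surjective (f := D.toLinearMap)).mp hDinj⟩
  set e' := LinearEquiv.toContinuousLinearEquiv (LinearEquiv.ofBijective
    (D.toLinearMap) hbij) with he'
  have hstrict : HasStrictFDerivAt Ψ (e' : _ →L[ℝ] _) z₀ := by
    have hee : (e' : _ →L[ℝ] _) = D := by
      apply ContinuousLinearMap.ext; intro v; rfl
    rw [hee, hDdef]
    exact hΨ1.contDiffAt.hasStrictFDerivAt one_ne_zero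
  set e := hstrict.toOpenPartialHomeomorph Ψ with hedef
  have hecoe : (e : _ → _) = Ψ := hstrict.toOpenPartialHomeomorph_coe
  have hz₀mem : z₀ ∈ e.source := hstrict.mem_toOpenPartialHomeomorph_source
  have h0target : (0 : ((ℝ × ℝ) × ((Fin m → ℝ) × (Fin ν → ℝ) × (Fin ν → ℝ)))) ∈ e.target := by
    have := hstrict.image_mem_toOpenPartialHomeomorph_target
    rwa [hΨ0] at this
  obtain ⟨r, hr0, hrsub⟩ := Metric.isOpen_iff.1 e.open_target 0 h0target
  obtain ⟨ρ, hρ0, hρsub⟩ := Metric.isOpen_iff.1 e.open_source z₀ hz₀mem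
  set sol : ℝ × ℝ → ((ℝ × ℝ) × ((Fin m → ℝ) × (Fin ν → ℝ) × (Fin ν → ℝ))) :=
    fun p => e.symm ((p, 0)) with hsoldef
  have h00 : ((((0:ℝ), (0:ℝ)), (0 : (Fin m → ℝ) × (Fin ν → ℝ) × (Fin ν → ℝ)))
      : ((ℝ × ℝ) × ((Fin m → ℝ) × (Fin ν → ℝ) × (Fin ν → ℝ)))) = 0 := rfl
  have hsol0 : sol (0, 0) = z₀ := by
    have h1 : e z₀ = 0 := by rw [hecoe]; exact hΨ0
    calc sol (0, 0) = e.symm 0 := rfl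
      _ = e.symm (e z₀) := by rw [h1]
      _ = z₀ := e.left_inv hz₀mem
  -- norms and distances
  have hnorm1 : ∀ p : ℝ × ℝ, dist (((p, 0) : ((ℝ × ℝ) ×
      ((Fin m → ℝ) × (Fin ν → ℝ) × (Fin ν → ℝ))))) 0 = max |p.1| |p.2| := by
    intro p
    rw [show (0 : ((ℝ × ℝ) × ((Fin m → ℝ) × (Fin ν → ℝ) × (Fin ν → ℝ))))
      = ((((0:ℝ),(0:ℝ)) : ℝ × ℝ), (0 : (Fin m → ℝ) × (Fin ν → ℝ) × (Fin ν → ℝ))) from rfl,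
      Prod.dist_eq, Prod.dist_eq, dist_self]
    simp only [Real.dist_eq, sub_zero]
    rw [max_eq_left (le_max_of_le_left (abs_nonneg _))]
  -- continuity of sol at 0
  have hsolc : ContinuousAt sol (0, 0) := by
    have h1 : ContinuousAt e.symm (((0:ℝ), (0:ℝ)),
        (0 : (Fin m → ℝ) × (Fin ν → ℝ) × (Fin ν → ℝ))) := by
      rw [h00]
      exact e.continuousAt_symm h0target
    have h2 : Continuous (fun p : ℝ × ℝ => ((p, 0) : ((ℝ × ℝ) ×
        ((Fin m → ℝ) × (Fin ν → ℝ) × (Fin ν → ℝ))))) :=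
      continuous_id.prodMk continuous_const
    exact ContinuousAt.comp h1 h2.continuousAt
  obtain ⟨δ₂, hδ₂0, hδ₂⟩ := Metric.continuousAt_iff.1 hsolc (ρ/3) (by linarith)
  rw [hsol0] at hδ₂
  refine ⟨min δ₂ (min r ρ), by positivity, ρ, hρ0, fun p => (sol p).2.1,
    fun p => (sol p).2.2.1, fun p => (sol p).2.2.2, ?_, ?_, ?_, ?_, ?_⟩
  · -- continuity
    have hmap : Set.MapsTo (fun p : ℝ × ℝ => ((p, 0) :
        ((ℝ × ℝ) × ((Fin m → ℝ) × (Fin ν → ℝ) × (Fin ν → ℝ)))))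
        {p : ℝ × ℝ | |p.1| < min δ₂ (min r ρ) ∧ |p.2| < min δ₂ (min r ρ)} e.target := by
      intro p hp
      apply hrsub
      rw [Metric.mem_ball, hnorm1 p]
      exact max_lt (lt_of_lt_of_le hp.1 (le_trans (min_le_right _ _) (min_le_left _ _)))
        (lt_of_lt_of_le hp.2 (le_trans (min_le_right _ _) (min_le_left _ _)))
    have hcont : ContinuousOn (fun p : ℝ × ℝ => (e.symm ((p, 0))).2)
        {p : ℝ × ℝ | |p.1| < min δ₂ (min r ρ) ∧ |p.2| < min δ₂ (min r ρ)} :=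
      continuous_snd.comp_continuousOn
        (e.continuousOn_symm.comp ((continuous_id.prodMk continuous_const).continuousOn) hmap)
    exact hcont
  · show (sol (0, 0)).2.1 = y
    rw [hsol0]
  · show (sol (0, 0)).2.2.1 = 0
    rw [hsol0]
  · show (sol (0, 0)).2.2.2 = 0
    rw [hsol0]
  · -- the main part
    intro h w hh hw
    have hqt : (((h, w), (0 : (Fin m → ℝ) × (Fin ν → ℝ) × (Fin ν → ℝ)))
        : ((ℝ × ℝ) × ((Fin m → ℝ) × (Fin ν → ℝ) × (Fin ν → ℝ)))) ∈ e.target := by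
      apply hrsub
      rw [Metric.mem_ball, hnorm1 (h, w)]
      exact max_lt (lt_of_lt_of_le hh (le_trans (min_le_right _ _) (min_le_left _ _)))
        (lt_of_lt_of_le hw (le_trans (min_le_right _ _) (min_le_left _ _)))
    have hz'mem : sol (h, w) ∈ e.source := e.map_target hqt
    have hΨz' : Ψ (sol (h, w)) = ((h, w), 0) := by
      have := e.right_inv hqt
      rwa [hecoe] at this
    have hz'1 : (sol (h, w)).1 = (h, w) := by
      have := congrArg (fun q => q.1) hΨz'
      simpa [hΨdef] using this
    have hRz' : R (sol (h, w)) = 0 := by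
      have := congrArg (fun q => q.2) hΨz'
      simpa [hΨdef] using this
    have heq : MAVFEquations m ν f g J y h w ((sol (h, w)).2.1) ((sol (h, w)).2.2.1)
        ((sol (h, w)).2.2.2) := by
      rw [hiff]
      have : ((h, w), ((sol (h, w)).2.1, (sol (h, w)).2.2.1, (sol (h, w)).2.2.2))
          = sol (h, w) := by
        refine Prod.ext hz'1.symm rfl
      rw [this]
      exact hRz'
    have hdistz' : dist (sol (h, w)) z₀ < ρ/3 := by
      apply hδ₂
      rw [Prod.dist_eq]
      simp only [Real.dist_eq, sub_zero]
      exact max_lt (lt_of_lt_of_le hh (min_le_left _ _)) (lt_of_lt_of_le hw (min_le_left _ _))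
      
    have hcomp : ∀ q : ((ℝ × ℝ) × ((Fin m → ℝ) × (Fin ν → ℝ) × (Fin ν → ℝ))),
        ‖q.2.1 - y‖ ≤ dist q z₀ ∧ ‖q.2.2.1‖ ≤ dist q z₀ ∧ ‖q.2.2.2‖ ≤ dist q z₀ := by
      intro q
      rw [hz₀def, Prod.dist_eq, Prod.dist_eq, Prod.dist_eq]
      refine ⟨?_, ?_, ?_⟩
      · rw [← dist_eq_norm]
        exact le_max_of_le_right (le_max_left _ _)
      · rw [← dist_zero_right]
        exact le_max_of_le_right (le_max_of_le_right (le_max_left _ _))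
      · rw [← dist_zero_right]
        exact le_max_of_le_right (le_max_of_le_right (le_max_right _ _))
    have hsum : ‖(sol (h, w)).2.1 - y‖ + ‖(sol (h, w)).2.2.1‖ + ‖(sol (h, w)).2.2.2‖ < ρ := by
      obtain ⟨q1, q2, q3⟩ := hcomp (sol (h, w))
      have hd : dist (sol (h, w)) z₀ ≥ 0 := dist_nonneg
      have h1 : ‖(sol (h, w)).2.1 - y‖ ≤ dist (sol (h, w)) z₀ := by
        have := q1; rwa [dist_eq_norm, hz₀def] at this ⊢
      linarith [q1, q2, q3, hdistz']
    refine ⟨heq, hsum, ?_⟩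
    -- uniqueness
    intro Y' b₀ b₁ heq' hnorm'
    have hR'' : R ((h, w), (Y', b₀, b₁)) = 0 := (hiff h w Y' b₀ b₁).1 heq'
    have hz''mem : (((h, w), (Y', b₀, b₁)) :
        ((ℝ × ℝ) × ((Fin m → ℝ) × (Fin ν → ℝ) × (Fin ν → ℝ)))) ∈ e.source := by
      apply hρsub
      rw [Metric.mem_ball, hz₀def, Prod.dist_eq, Prod.dist_eq, Prod.dist_eq, Prod.dist_eq]
      have hb1 : ‖Y' - y‖ < ρ := by
        have := norm_nonneg b₀; have := norm_nonneg b₁; linarith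
      have hb2 : ‖b₀‖ < ρ := by
        have := norm_nonneg (Y' - y); have := norm_nonneg b₁; linarith
      have hb3 : ‖b₁‖ < ρ := by
        have := norm_nonneg (Y' - y); have := norm_nonneg b₀; linarith
      refine max_lt (max_lt ?_ ?_) (max_lt ?_ (max_lt ?_ ?_))
      · simp only [Real.dist_eq, sub_zero]
        exact lt_of_lt_of_le hh (le_trans (min_le_right _ _) (min_le_right _ _))
      · simp only [Real.dist_eq, sub_zero]
        exact lt_of_lt_of_le hw (le_trans (min_le_right _ _) (min_le_right _ _))
      · rwa [dist_eq_norm]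
      · rwa [dist_eq_norm, sub_zero]
      · rwa [dist_eq_norm, sub_zero]
    have hΨz'' : Ψ (((h, w), (Y', b₀, b₁))) = ((h, w), 0) := by
      rw [hΨdef]
      simp only [hR'']
    have hEeq : e (((h, w), (Y', b₀, b₁))) = e (sol (h, w)) := by
      rw [hecoe, hΨz'', hΨz']
    have := e.injOn hz''mem hz'mem hEeq
    refine ⟨?_, ?_, ?_⟩
    · exact congrArg (fun q => q.2.1) this
    · exact congrArg (fun q => q.2.2.1) this
    · exact congrArg (fun q => q.2.2.2) this
end
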